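/- arXiv:2408.16525 — 4 statements merged into one kernel-verified Lean document; each statement's English description precedes it below -/
import Mathlib

section
/- Let κ < 0 and N > 1 be real, let I be an open real interval, and let h be a CD(κ,N) density on I which is positive at every point of I. Then the right derivative D(x) := (log∘h)'⁺(x) exists in ℝ at every x ∈ I, and for all x, y ∈ I with x < y one has D(y) − D(x) + (1/(N−1))·∫ₓʸ D(r)² dr ≤ −κ·(y−x), where the integral is a Lebesgue integral. -/
open Set MeasureTheory Filter Topology


lemma cdAux_slope_anti {S : Set ℝ} {f : ℝ → ℝ} (hf : ConcaveOn ℝ S f) {v : ℝ} (hv : v ∈ S) :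
    AntitoneOn (slope f v) (S \ {v}) := by
  intro z₁ hz₁ z₂ hz₂ h12
  have h := hf.neg.secant_mono hv hz₁.1 hz₂.1 hz₁.2 hz₂.2 h12
  simp only [Pi.neg_apply] at h
  have e1 : ∀ z : ℝ, (-f z - -f v) / (z - v) = -slope f v z := by
    intro z; rw [slope_def_field]; ring
  rw [e1 z₁, e1 z₂] at h
  linarith

/-- the right-derivative candidate of a function at `v` relative to a set `S`. -/
noncomputable def cdRD (S : Set ℝ) (f : ℝ → ℝ) (v : ℝ) : ℝ :=
  sSup (slope f v '' (S ∩ Set.Ioi v))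

lemma cdAux_mem_ub {S : Set ℝ} {f : ℝ → ℝ} (hf : ConcaveOn ℝ S f) {v u : ℝ} (hv : v ∈ S)
    (hu : u ∈ S) (huv : u < v) :
    slope f v u ∈ upperBounds (slope f v '' (S ∩ Set.Ioi v)) := by
  rintro _ ⟨z, ⟨hzS, hzv⟩, rfl⟩
  rw [mem_Ioi] at hzv
  exact cdAux_slope_anti hf hv ⟨hu, by simp [huv.ne]⟩ ⟨hzS, by simp [hzv.ne']⟩
    (huv.le.trans (le_of_lt hzv))

lemma cdAux_rd_le {S : Set ℝ} {f : ℝ → ℝ} (hf : ConcaveOn ℝ S f) {v u b : ℝ} (hv : v ∈ S)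
    (hu : u ∈ S) (huv : u < v) (hb : b ∈ S) (hvb : v < b) :
    cdRD S f v ≤ slope f v u :=
  csSup_le (Nonempty.image _ ⟨b, hb, hvb⟩) (fun _ hx => cdAux_mem_ub hf hv hu huv hx)

lemma cdAux_le_rd {S : Set ℝ} {f : ℝ → ℝ} (hf : ConcaveOn ℝ S f) {v u b : ℝ} (hv : v ∈ S)
    (hu : u ∈ S) (huv : u < v) (hb : b ∈ S) (hvb : v < b) :
    slope f v b ≤ cdRD S f v :=
  le_csSup ⟨slope f v u, cdAux_mem_ub hf hv hu huv⟩ (mem_image_of_mem _ ⟨hb, hvb⟩)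

lemma cdAux_hasDerivWithinAt {S : Set ℝ} {f : ℝ → ℝ} (hf : ConcaveOn ℝ S f) {v u b : ℝ}
    (hv : v ∈ S) (hu : u ∈ S) (huv : u < v) (hb : b ∈ S) (hvb : v < b) :
    HasDerivWithinAt f (cdRD S f v) (Set.Ioi v) v := by
  have hSsub : Ioo v b ⊆ S ∩ Set.Ioi v := by
    intro z hz
    exact ⟨hf.1.ordConnected.out hv hb ⟨hz.1.le, hz.2.le⟩, hz.1⟩
  have hanti : AntitoneOn (slope f v) (Ioo v b) := by
    apply (cdAux_slope_anti hf hv).mono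
    intro z hz
    exact ⟨(hSsub hz).1, by simp [hz.1.ne']⟩
  have hbdd : BddAbove (slope f v '' Ioo v b) := by
    refine ⟨slope f v u, ?_⟩
    rintro _ ⟨z, hz, rfl⟩
    exact cdAux_mem_ub hf hv hu huv (mem_image_of_mem _ (hSsub hz))
  have hne : (Ioo v b).Nonempty := ⟨(v + b) / 2, by constructor <;> nlinarith⟩
  have ht := hanti.tendsto_nhdsWithin_Ioo_right hne hbdd
  have hsup : sSup (slope f v '' Ioo v b) = cdRD S f v := by
    apply csSup_eq_csSup_of_forall_exists_le
    · rintro x ⟨z, hz, rfl⟩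
      exact ⟨slope f v z, mem_image_of_mem _ (hSsub hz), le_rfl⟩
    · rintro x ⟨z, ⟨hzS, hzv⟩, rfl⟩
      simp only [mem_Ioi] at hzv
      refine ⟨slope f v (min z ((v + b) / 2)), mem_image_of_mem _ ?_, ?_⟩
      · exact ⟨lt_min hzv (by nlinarith), lt_of_le_of_lt (min_le_right _ _) (by nlinarith)⟩
      · have hmin : v < min z ((v+b)/2) := lt_min hzv (by nlinarith)
        apply cdAux_slope_anti hf hv ⟨?_, by simp [hmin.ne']⟩ ⟨hzS, by simp [hzv.ne']⟩
          (min_le_left _ _)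
        rcases le_total z ((v+b)/2) with hc | hc
        · rwa [min_eq_left hc]
        · rw [min_eq_right hc]
          exact hf.1.ordConnected.out hv hb ⟨by nlinarith, by nlinarith⟩
  rw [hasDerivWithinAt_iff_tendsto_slope' (by simp)]
  rw [← hsup]
  exact ht

lemma cdAux_rd_anti {S : Set ℝ} {f : ℝ → ℝ} (hf : ConcaveOn ℝ S f) {u₁ v₁ v₂ b₂ : ℝ}
    (hu₁ : u₁ ∈ S) (hv₁ : v₁ ∈ S) (hv₂ : v₂ ∈ S) (hb₂ : b₂ ∈ S)
    (h1 : u₁ < v₁) (h2 : v₁ < v₂) (h3 : v₂ < b₂) :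
    cdRD S f v₂ ≤ cdRD S f v₁ := by
  have step1 : cdRD S f v₂ ≤ slope f v₁ v₂ := by
    refine csSup_le (Nonempty.image _ ⟨b₂, hb₂, h3⟩) ?_
    rintro _ ⟨z, ⟨hzS, hzv⟩, rfl⟩
    rw [mem_Ioi] at hzv
    rw [show slope f v₁ v₂ = slope f v₂ v₁ from slope_comm f v₁ v₂]
    exact cdAux_slope_anti hf hv₂ ⟨hv₁, by simp [h2.ne]⟩ ⟨hzS, by simp [hzv.ne']⟩
      (h2.le.trans hzv.le)
  refine step1.trans (le_csSup ⟨slope f v₁ u₁, cdAux_mem_ub hf hv₁ hu₁ h1⟩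
    (mem_image_of_mem _ ⟨hv₂, h2⟩))

lemma cdAux_rd_le_slope_left {S : Set ℝ} {f : ℝ → ℝ} (hf : ConcaveOn ℝ S f) {v z b : ℝ}
    (hv : v ∈ S) (hz : z ∈ S) (hzv : z < v) (hb : b ∈ S) (hvb : v < b) :
    cdRD S f v ≤ slope f v z :=
  cdAux_rd_le hf hv hz hzv hb hvb

lemma cdAux_log_concave {S : Set ℝ} {f : ℝ → ℝ} (hf : ConcaveOn ℝ S f)
    (hpos : ∀ v ∈ S, 0 < f v) : ConcaveOn ℝ S (fun v => Real.log (f v)) := by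
  refine ⟨hf.1, fun v₀ h₀ v₁ h₁ α β hα hβ hαβ => ?_⟩
  have hf₀ := hpos v₀ h₀
  have hf₁ := hpos v₁ h₁
  have hcomb : 0 < α * f v₀ + β * f v₁ := by
    rcases eq_or_lt_of_le hα with rfl | hα'
    · simp only [zero_mul, zero_add]
      have : β = 1 := by linarith
      nlinarith
    · have : 0 ≤ β * f v₁ := mul_nonneg hβ hf₁.le
      nlinarith
  calc α • Real.log (f v₀) + β • Real.log (f v₁)
      ≤ Real.log (α • f v₀ + β • f v₁) :=
        strictConcaveOn_log_Ioi.concaveOn.2 hf₀ hf₁ hα hβ hαβ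
    _ ≤ Real.log (f (α • v₀ + β • v₁)) := by
        apply Real.log_le_log (by simpa [smul_eq_mul] using hcomb)
        exact hf.2 h₀ h₁ hα hβ hαβ

lemma cdAux_mono_ftc {G : ℝ → ℝ} (hG : Monotone G) :
    ∃ G' : ℝ → ℝ, (∀ r, 0 ≤ G' r) ∧ Measurable G' ∧ (∀ᵐ r, HasDerivAt G (G' r) r) ∧
      ∀ a b : ℝ, a ≤ b → IntegrableOn G' (Set.Ioo a b) ∧
        ∫ r in Set.Ioo a b, G' r ≤ G b - G a := by
  classical
  refine ⟨fun r => (Measure.rnDeriv hG.stieltjesFunction.measure volume r).toReal,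
    fun r => ENNReal.toReal_nonneg,
    (Measure.measurable_rnDeriv _ _).ennreal_toReal, hG.ae_hasDerivAt, ?_⟩
  intro a b hab
  set μ := hG.stieltjesFunction.measure with hμdef
  have hμ : μ (Set.Ioo a b) ≠ ⊤ := by
    rw [StieltjesFunction.measure_Ioo]
    exact ENNReal.ofReal_ne_top
  refine ⟨Measure.integrableOn_toReal_rnDeriv hμ, ?_⟩
  have h1 : ∫ r in Set.Ioo a b, (Measure.rnDeriv μ volume r).toReal ≤ (μ (Set.Ioo a b)).toReal :=
    Measure.setIntegral_toReal_rnDeriv_le hμ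
  refine h1.trans ?_
  rw [StieltjesFunction.measure_Ioo]
  -- bound `leftLim sf b - sf a ≤ G b - G a`
  have hsfa : G a ≤ hG.stieltjesFunction a := by
    rw [hG.stieltjesFunction_eq]
    exact hG.le_rightLim le_rfl
  have hsfb : Function.leftLim (hG.stieltjesFunction) b ≤ G b := by
    have htd := hG.stieltjesFunction.mono.tendsto_leftLim b
    apply le_of_tendsto htd
    filter_upwards [self_mem_nhdsWithin] with z hz
    rw [hG.stieltjesFunction_eq]
    exact hG.rightLim_le hz
  have hGab : 0 ≤ G b - G a := sub_nonneg.2 (hG hab)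
  rcases le_total (Function.leftLim (hG.stieltjesFunction) b - hG.stieltjesFunction a) 0 with
    hd | hd
  · rw [ENNReal.ofReal_eq_zero.2 hd]
    simpa using hGab
  · rw [ENNReal.toReal_ofReal hd]
    linarith

noncomputable def cdChart (l r : ℝ) : ℝ := -Real.exp (-(2 * l * r)) / (2 * l)
noncomputable def cdChartInv (l v : ℝ) : ℝ := -(Real.log (-(2 * l * v)) / (2 * l))
noncomputable def cdE (l : ℝ) (g : ℝ → ℝ) (r : ℝ) : ℝ := g r * Real.exp (-(l * r))
noncomputable def cdPhi (l : ℝ) (g : ℝ → ℝ) (v : ℝ) : ℝ := cdE l g (cdChartInv l v)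

lemma cdChartInv_cdChart {l : ℝ} (hl : 0 < l) (r : ℝ) : cdChartInv l (cdChart l r) = r := by
  unfold cdChartInv cdChart
  rw [show -(2 * l * (-Real.exp (-(2 * l * r)) / (2 * l))) = Real.exp (-(2 * l * r)) by
    field_simp]
  rw [Real.log_exp]
  field_simp

lemma cdChart_neg {l : ℝ} (hl : 0 < l) (r : ℝ) : cdChart l r < 0 := by
  unfold cdChart
  apply div_neg_of_neg_of_pos
  · simp [Real.exp_pos]
  · linarith

lemma cdChart_cdChartInv {l : ℝ} (hl : 0 < l) {v : ℝ} (hv : v < 0) :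
    cdChart l (cdChartInv l v) = v := by
  unfold cdChartInv cdChart
  rw [show -(2 * l * -(Real.log (-(2 * l * v)) / (2 * l))) = Real.log (-(2 * l * v)) by
    field_simp]
  rw [Real.exp_log (by nlinarith)]
  field_simp

lemma cdChart_strictMono {l : ℝ} (hl : 0 < l) : StrictMono (cdChart l) := by
  intro r₁ r₂ h
  unfold cdChart
  have he : Real.exp (-(2 * l * r₂)) < Real.exp (-(2 * l * r₁)) := by
    apply Real.exp_lt_exp.2; nlinarith
  have h2l : (0:ℝ) < 2 * l := by linarith
  rw [div_lt_div_iff₀ h2l h2l]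
  nlinarith

lemma cdChart_hasDerivAt {l : ℝ} (hl : 0 < l) (r : ℝ) :
    HasDerivAt (cdChart l) (Real.exp (-(2 * l * r))) r := by
  have h1 : HasDerivAt (fun r : ℝ => -(2 * l * r)) (-(2 * l)) r := by
    simpa using ((hasDerivAt_id r).const_mul (2 * l)).fun_neg
  have h2 := (Real.hasDerivAt_exp (-(2 * l * r))).comp r h1
  have h3 := (h2.fun_neg).div_const (2 * l)
  refine h3.congr_deriv ?_
  field_simp

lemma cdAux_core_alg {α β A B C g₀ g₁ gs : ℝ} (hA : 0 < A) (hB : 0 < B) (hC : 0 < C)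
    (hBA : B < A) (hCsq : C ^ 2 = α * A ^ 2 + β * B ^ 2) (hαβ : α + β = 1)
    (hsinh : (C / B - B / C) / 2 * g₀ + (A / C - C / A) / 2 * g₁ ≤ (A / B - B / A) / 2 * gs) :
    α * (g₀ * A) + β * (g₁ * B) ≤ gs * C := by
  have hpos : 0 < (A / B - B / A) / 2 := by
    have h1 : B / A < 1 := (div_lt_one hA).2 hBA
    have h2 : 1 < A / B := (one_lt_div hB).2 hBA
    linarith
  have key1 : (A / B - B / A) / 2 * (α * (g₀ * A) + β * (g₁ * B)) =
      C * ((C / B - B / C) / 2 * g₀ + (A / C - C / A) / 2 * g₁) := by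
    field_simp
    linear_combination (B*g₁ - A*g₀) * hCsq +
      (A^2*B*g₁ - A*B^2*g₀) * hαβ
  have key2 : C * ((C / B - B / C) / 2 * g₀ + (A / C - C / A) / 2 * g₁) ≤
      C * ((A / B - B / A) / 2 * gs) := mul_le_mul_of_nonneg_left hsinh hC.le
  have := key1.trans_le key2
  have h3 : (A / B - B / A) / 2 * (α * (g₀ * A) + β * (g₁ * B)) ≤
      (A / B - B / A) / 2 * (gs * C) := by
    calc (A / B - B / A) / 2 * (α * (g₀ * A) + β * (g₁ * B))
        ≤ C * ((A / B - B / A) / 2 * gs) := this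
      _ = (A / B - B / A) / 2 * (gs * C) := by ring
  exact le_of_mul_le_mul_left h3 hpos

lemma cdAux_chart_concave {l : ℝ} (hl : 0 < l) {I : Set ℝ} (hI' : I.OrdConnected) {g : ℝ → ℝ}
    (Hsc : ∀ r₀ ∈ I, ∀ r₁ ∈ I, r₀ < r₁ → ∀ s ∈ Icc r₀ r₁,
      Real.sinh (l * (r₁ - s)) * g r₀ + Real.sinh (l * (s - r₀)) * g r₁ ≤
        Real.sinh (l * (r₁ - r₀)) * g s) :
    ConcaveOn ℝ (cdChart l '' I) (cdPhi l g) := by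
  have hσ := cdChart_strictMono hl
  have hconv : Convex ℝ (cdChart l '' I) := by
    rw [convex_iff_ordConnected]
    constructor
    rintro _ ⟨r₀, hr₀, rfl⟩ _ ⟨r₁, hr₁, rfl⟩ z hz
    have hzneg : z < 0 := lt_of_le_of_lt hz.2 (cdChart_neg hl r₁)
    refine ⟨cdChartInv l z, ?_, cdChart_cdChartInv hl hzneg⟩
    have h1 : r₀ ≤ cdChartInv l z := by
      rw [← hσ.le_iff_le]
      rw [cdChart_cdChartInv hl hzneg]
      exact hz.1
    have h2 : cdChartInv l z ≤ r₁ := by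
      rw [← hσ.le_iff_le]
      rw [cdChart_cdChartInv hl hzneg]
      exact hz.2
    exact hI'.out hr₀ hr₁ ⟨h1, h2⟩
  have key : ∀ r₀ ∈ I, ∀ r₁ ∈ I, r₀ < r₁ → ∀ α β : ℝ, 0 ≤ α → 0 ≤ β → α + β = 1 →
      α * cdPhi l g (cdChart l r₀) + β * cdPhi l g (cdChart l r₁) ≤
        cdPhi l g (α * cdChart l r₀ + β * cdChart l r₁) := by
    intro r₀ hr₀ r₁ hr₁ hr α β hα hβ hαβ
    have hv01 : cdChart l r₀ < cdChart l r₁ := hσ hr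
    have hvt1 : α * cdChart l r₀ + β * cdChart l r₁ ≤ cdChart l r₁ := by
      have := Convex.combo_le_max (cdChart l r₀) (cdChart l r₁) hα hβ hαβ
      rwa [max_eq_right hv01.le] at this
    have hvt0 : cdChart l r₀ ≤ α * cdChart l r₀ + β * cdChart l r₁ := by
      have := Convex.min_le_combo (cdChart l r₀) (cdChart l r₁) hα hβ hαβ
      rwa [min_eq_left hv01.le] at this
    have hvtneg : α * cdChart l r₀ + β * cdChart l r₁ < 0 :=
      lt_of_le_of_lt hvt1 (cdChart_neg hl r₁)
    set s := cdChartInv l (α * cdChart l r₀ + β * cdChart l r₁) with hs_def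
    have hσs : cdChart l s = α * cdChart l r₀ + β * cdChart l r₁ :=
      cdChart_cdChartInv hl hvtneg
    have hs0 : r₀ ≤ s := by rw [← hσ.le_iff_le, hσs]; exact hvt0
    have hs1 : s ≤ r₁ := by rw [← hσ.le_iff_le, hσs]; exact hvt1
    have hsc := Hsc r₀ hr₀ r₁ hr₁ hr s ⟨hs0, hs1⟩
    have hΦ₀ : cdPhi l g (cdChart l r₀) = g r₀ * Real.exp (-(l * r₀)) := by
      simp [cdPhi, cdE, cdChartInv_cdChart hl]
    have hΦ₁ : cdPhi l g (cdChart l r₁) = g r₁ * Real.exp (-(l * r₁)) := by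
      simp [cdPhi, cdE, cdChartInv_cdChart hl]
    have hΦt : cdPhi l g (α * cdChart l r₀ + β * cdChart l r₁) = g s * Real.exp (-(l * s)) := by
      rw [cdPhi, ← hs_def]; rfl
    rw [hΦ₀, hΦ₁, hΦt]
    -- set up abstract algebra lemma
    have hA : (0:ℝ) < Real.exp (-(l * r₀)) := Real.exp_pos _
    have hB : (0:ℝ) < Real.exp (-(l * r₁)) := Real.exp_pos _
    have hC : (0:ℝ) < Real.exp (-(l * s)) := Real.exp_pos _
    have hBA : Real.exp (-(l * r₁)) < Real.exp (-(l * r₀)) := by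
      apply Real.exp_lt_exp.2; nlinarith
    have esq : ∀ r : ℝ, Real.exp (-(2 * l * r)) = Real.exp (-(l * r)) ^ 2 := by
      intro r
      rw [sq, ← Real.exp_add]
      congr 1
      ring
    have hCsq : Real.exp (-(l * s)) ^ 2 =
        α * Real.exp (-(l * r₀)) ^ 2 + β * Real.exp (-(l * r₁)) ^ 2 := by
      have hx := hσs
      unfold cdChart at hx
      rw [esq r₀, esq r₁, esq s] at hx
      have hl' : (2:ℝ) * l ≠ 0 := by positivity
      field_simp at hx
      have h4l : (0:ℝ) < 2 * l * (2 * l) := by positivity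
      refine mul_right_cancel₀ h4l.ne' ?_
      linear_combination (-4 * l ^ 2) * hx
    have hsinh : (Real.exp (-(l * s)) / Real.exp (-(l * r₁)) -
          Real.exp (-(l * r₁)) / Real.exp (-(l * s))) / 2 * g r₀ +
        (Real.exp (-(l * r₀)) / Real.exp (-(l * s)) -
          Real.exp (-(l * s)) / Real.exp (-(l * r₀))) / 2 * g r₁ ≤
        (Real.exp (-(l * r₀)) / Real.exp (-(l * r₁)) -
          Real.exp (-(l * r₁)) / Real.exp (-(l * r₀))) / 2 * g s := by
      have e1 : Real.sinh (l * (r₁ - s)) = (Real.exp (-(l * s)) / Real.exp (-(l * r₁)) -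
          Real.exp (-(l * r₁)) / Real.exp (-(l * s))) / 2 := by
        rw [Real.sinh_eq, ← Real.exp_sub, ← Real.exp_sub]
        congr 3 <;> ring
      have e2 : Real.sinh (l * (s - r₀)) = (Real.exp (-(l * r₀)) / Real.exp (-(l * s)) -
          Real.exp (-(l * s)) / Real.exp (-(l * r₀))) / 2 := by
        rw [Real.sinh_eq, ← Real.exp_sub, ← Real.exp_sub]
        congr 3 <;> ring
      have e3 : Real.sinh (l * (r₁ - r₀)) = (Real.exp (-(l * r₀)) / Real.exp (-(l * r₁)) -
          Real.exp (-(l * r₁)) / Real.exp (-(l * r₀))) / 2 := by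
        rw [Real.sinh_eq, ← Real.exp_sub, ← Real.exp_sub]
        congr 3 <;> ring
      rw [← e1, ← e2, ← e3]
      exact hsc
    exact cdAux_core_alg hA hB hC hBA hCsq hαβ hsinh
  refine ⟨hconv, ?_⟩
  rintro _ ⟨r₀, hr₀, rfl⟩ _ ⟨r₁, hr₁, rfl⟩ α β hα hβ hαβ
  simp only [smul_eq_mul]
  rcases lt_trichotomy r₀ r₁ with h | h | h
  · exact key r₀ hr₀ r₁ hr₁ h α β hα hβ hαβ
  · subst h
    have hcomb : α * cdChart l r₀ + β * cdChart l r₀ = cdChart l r₀ := by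
      rw [← add_mul, hαβ, one_mul]
    rw [hcomb]
    have : α * cdPhi l g (cdChart l r₀) + β * cdPhi l g (cdChart l r₀) =
        cdPhi l g (cdChart l r₀) := by rw [← add_mul, hαβ, one_mul]
    linarith
  · have hkey := key r₁ hr₁ r₀ hr₀ h β α hβ hα (by linarith)
    rw [show β * cdChart l r₁ + α * cdChart l r₀ = α * cdChart l r₀ + β * cdChart l r₁ from
      by ring] at hkey
    linarith
noncomputable def cdW (l : ℝ) (g : ℝ → ℝ) (I : Set ℝ) (r : ℝ) : ℝ :=
  cdRD (cdChart l '' I) (cdPhi l g) (cdChart l r)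
noncomputable def cdA (l : ℝ) (g : ℝ → ℝ) (I : Set ℝ) (r : ℝ) : ℝ := cdW l g I r / cdE l g r
noncomputable def cdD (N l : ℝ) (g : ℝ → ℝ) (I : Set ℝ) (r : ℝ) : ℝ :=
  (N - 1) * (cdA l g I r * Real.exp (-(2 * l * r)) + l)

def IsCDNegDensity (κ N : ℝ) (I : Set ℝ) (h : ℝ → ℝ) : Prop :=
  (∀ x ∈ I, 0 ≤ h x) ∧
    ∀ x₀ ∈ I, ∀ x₁ ∈ I, x₀ ≠ x₁ → ∀ t ∈ Set.Icc (0 : ℝ) 1,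
      Real.sinh (Real.sqrt (-κ / (N - 1)) * ((1 - t) * |x₁ - x₀|)) /
            Real.sinh (Real.sqrt (-κ / (N - 1)) * |x₁ - x₀|) * h x₀ ^ (1 / (N - 1)) +
          Real.sinh (Real.sqrt (-κ / (N - 1)) * (t * |x₁ - x₀|)) /
            Real.sinh (Real.sqrt (-κ / (N - 1)) * |x₁ - x₀|) * h x₁ ^ (1 / (N - 1)) ≤
        h ((1 - t) * x₀ + t * x₁) ^ (1 / (N - 1))

/-- One-dimensional Bochner-type inequality along a transport ray: for a positive
`CD(κ,N)` density (`κ < 0`) on an open interval `I`, the right derivative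
`D = (log h)'⁺` exists everywhere on `I`, and it satisfies the integrated Riccati
inequality `D(y) - D(x) + (1/(N-1)) ∫ₓʸ D² ≤ -κ·(y-x)` for `x < y` in `I`. -/
theorem cd_neg_density_bochner (κ N : ℝ) (I : Set ℝ) (h : ℝ → ℝ)
    (hκ : κ < 0) (hN : 1 < N) (hI : IsOpen I) (hI' : I.OrdConnected)
    (hCD : IsCDNegDensity κ N I h) (hpos : ∀ x ∈ I, 0 < h x) :
    ∃ D : ℝ → ℝ,
      (∀ x ∈ I, HasDerivWithinAt (fun y => Real.log (h y)) (D x) (Set.Ioi x) x) ∧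
      ∀ x ∈ I, ∀ y ∈ I, x < y →
        D y - D x + (1 / (N - 1)) * ∫ r in x..y, (D r) ^ 2 ≤ -κ * (y - x) := by
  have hN1 : (0:ℝ) < N - 1 := by linarith
  set l : ℝ := Real.sqrt (-κ / (N - 1)) with hl_def
  have hlsq : l ^ 2 = -κ / (N - 1) := Real.sq_sqrt (div_nonneg (by linarith) hN1.le)
  have hl : 0 < l := Real.sqrt_pos.2 (div_pos (by linarith) hN1)
  set g : ℝ → ℝ := fun r => h r ^ (1 / (N - 1)) with hg_def
  have hgpos : ∀ r ∈ I, 0 < g r := fun r hr => Real.rpow_pos_of_pos (hpos r hr) _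
  have hσ := cdChart_strictMono hl
  -- the sinh-concavity inequality
  have Hsc : ∀ r₀ ∈ I, ∀ r₁ ∈ I, r₀ < r₁ → ∀ s ∈ Set.Icc r₀ r₁,
      Real.sinh (l * (r₁ - s)) * g r₀ + Real.sinh (l * (s - r₀)) * g r₁ ≤
        Real.sinh (l * (r₁ - r₀)) * g s := by
    intro r₀ hr₀ r₁ hr₁ hr s hs
    have hd : 0 < r₁ - r₀ := by linarith
    have ht0 : 0 ≤ (s - r₀) / (r₁ - r₀) := div_nonneg (by linarith [hs.1]) hd.le
    have ht1 : (s - r₀) / (r₁ - r₀) ≤ 1 := (div_le_one hd).2 (by linarith [hs.2])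
    have hcd := hCD.2 r₀ hr₀ r₁ hr₁ hr.ne ((s - r₀) / (r₁ - r₀)) ⟨ht0, ht1⟩
    rw [show |r₁ - r₀| = r₁ - r₀ from abs_of_pos hd] at hcd
    rw [show (1 - (s - r₀) / (r₁ - r₀)) * (r₁ - r₀) = r₁ - s by field_simp; try ring] at hcd
    rw [show (s - r₀) / (r₁ - r₀) * (r₁ - r₀) = s - r₀ by field_simp] at hcd

    rw [show (1 - (s - r₀) / (r₁ - r₀)) * r₀ + (s - r₀) / (r₁ - r₀) * r₁ = s by
      field_simp; try ring] at hcd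
    have hsp : 0 < Real.sinh (l * (r₁ - r₀)) := Real.sinh_pos_iff.2 (by positivity)
    rw [div_mul_eq_mul_div, div_mul_eq_mul_div, ← add_div, div_le_iff₀ hsp] at hcd
    linarith [hcd]
  have hconc : ConcaveOn ℝ (cdChart l '' I) (cdPhi l g) := cdAux_chart_concave hl hI' Hsc
  have hE : ∀ r, cdPhi l g (cdChart l r) = cdE l g r := by
    intro r; rw [cdPhi, cdChartInv_cdChart hl]
  have hEpos : ∀ r ∈ I, 0 < cdE l g r := fun r hr => mul_pos (hgpos r hr) (Real.exp_pos _)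
  have hΦpos : ∀ v ∈ cdChart l '' I, 0 < cdPhi l g v := by
    rintro _ ⟨r, hr, rfl⟩; rw [hE]; exact hEpos r hr
  have hLconc : ConcaveOn ℝ (cdChart l '' I) (fun v => Real.log (cdPhi l g v)) :=
    cdAux_log_concave hconc hΦpos
  have hnbhd : ∀ r ∈ I, ∃ p q : ℝ, p ∈ I ∧ q ∈ I ∧ p < r ∧ r < q := by
    intro r hr
    obtain ⟨ε, hε, hball⟩ := Metric.isOpen_iff.1 hI r hr
    refine ⟨r - ε / 2, r + ε / 2, hball ?_, hball ?_, by linarith, by linarith⟩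
    · rw [Metric.mem_ball, Real.dist_eq, show r - ε / 2 - r = -(ε / 2) by ring, abs_neg,
        abs_of_pos (by linarith)]; linarith
    · rw [Metric.mem_ball, Real.dist_eq, show r + ε / 2 - r = ε / 2 by ring,
        abs_of_pos (by linarith)]; linarith
  -- right derivatives of Φ and log Φ at chart points
  have hWd : ∀ r ∈ I, HasDerivWithinAt (cdPhi l g)
      (cdRD (cdChart l '' I) (cdPhi l g) (cdChart l r)) (Set.Ioi (cdChart l r)) (cdChart l r) := by
    intro r hr
    obtain ⟨p, q, hp, hq, hpr, hrq⟩ := hnbhd r hr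
    exact cdAux_hasDerivWithinAt hconc ⟨r, hr, rfl⟩ ⟨p, hp, rfl⟩ (hσ hpr) ⟨q, hq, rfl⟩ (hσ hrq)
  have hLd : ∀ r ∈ I, HasDerivWithinAt (fun v => Real.log (cdPhi l g v))
      (cdRD (cdChart l '' I) (fun v => Real.log (cdPhi l g v)) (cdChart l r))
      (Set.Ioi (cdChart l r)) (cdChart l r) := by
    intro r hr
    obtain ⟨p, q, hp, hq, hpr, hrq⟩ := hnbhd r hr
    exact cdAux_hasDerivWithinAt hLconc ⟨r, hr, rfl⟩ ⟨p, hp, rfl⟩ (hσ hpr) ⟨q, hq, rfl⟩ (hσ hrq)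
  set w : ℝ → ℝ := cdW l g I with hw_def
  set a : ℝ → ℝ := cdA l g I with ha_def
  set D : ℝ → ℝ := cdD N l g I with hD_def
  have hwr : ∀ r, w r = cdRD (cdChart l '' I) (cdPhi l g) (cdChart l r) := fun r => rfl
  have har : ∀ r, a r = w r / cdE l g r := fun r => rfl
  have hDr : ∀ r, D r = (N - 1) * (a r * Real.exp (-(2 * l * r)) + l) := fun r => rfl
  have hWLeq : ∀ r ∈ I, a r =
      cdRD (cdChart l '' I) (fun v => Real.log (cdPhi l g v)) (cdChart l r) := by
    intro r hr
    have h2 := (hWd r hr).log (by rw [hE]; exact (hEpos r hr).ne')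
    rw [hE r] at h2
    rw [har r, hwr r]
    exact ((uniqueDiffWithinAt_Ioi (cdChart l r)).eq_deriv _ (hLd r hr) h2).symm
  have hEd : ∀ r ∈ I, HasDerivWithinAt (cdE l g)
      (w r * Real.exp (-(2 * l * r))) (Set.Ioi r) r := by
    intro r hr
    rw [hwr r]
    have h1 := (hWd r hr).comp r (cdChart_hasDerivAt hl r).hasDerivWithinAt
      (fun z hz => hσ hz)
    have h2 : cdPhi l g ∘ cdChart l = cdE l g := funext fun y => hE y
    rwa [h2] at h1
  have hDd : ∀ x ∈ I, HasDerivWithinAt (fun y => Real.log (h y)) (D x) (Set.Ioi x) x := by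
    intro x hx
    have h1 := (hWd x hx).comp x (cdChart_hasDerivAt hl x).hasDerivWithinAt
      (fun z hz => hσ hz)
    have h2 := h1.log (x := x) (by
      show cdPhi l g (cdChart l x) ≠ 0
      rw [hE]; exact (hEpos x hx).ne')
    have h3 : HasDerivWithinAt (fun y : ℝ => l * y) l (Set.Ioi x) x := by
      simpa using ((hasDerivAt_id x).const_mul l).hasDerivWithinAt
    have h4 := (h2.add h3).const_mul (N - 1)
    have hval : (N - 1) * (cdRD (cdChart l '' I) (cdPhi l g) (cdChart l x) *
        Real.exp (-(2 * l * x)) / cdPhi l g (cdChart l x) + l) = D x := by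
      rw [hE x, hDr x, har x, hwr x]
      ring
    refine hval ▸ h4.congr_of_eventuallyEq ?_ ?_
    · filter_upwards [nhdsWithin_le_nhds (hI.mem_nhds hx)] with z hz
      show Real.log (h z) = (N - 1) * (Real.log ((cdPhi l g ∘ cdChart l) z) + l * z)
      have : (cdPhi l g ∘ cdChart l) z = g z * Real.exp (-(l * z)) := hE z
      rw [this, Real.log_mul (hgpos z hz).ne' (Real.exp_pos _).ne', Real.log_exp,
        hg_def, Real.log_rpow (hpos z hz)]
      field_simp
      try ring
    · show Real.log (h x) = (N - 1) * (Real.log ((cdPhi l g ∘ cdChart l) x) + l * x)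
      have : (cdPhi l g ∘ cdChart l) x = g x * Real.exp (-(l * x)) := hE x
      rw [this, Real.log_mul (hgpos x hx).ne' (Real.exp_pos _).ne', Real.log_exp,
        hg_def, Real.log_rpow (hpos x hx)]
      field_simp
      try ring
  refine ⟨D, hDd, ?_⟩
  intro x hx y hy hxy
  have hIcc : Set.Icc x y ⊆ I := hI'.out hx hy
  have ha_anti : ∀ r₁ ∈ I, ∀ r₂ ∈ I, r₁ ≤ r₂ → a r₂ ≤ a r₁ := by
    intro r₁ h1 r₂ h2 h12
    rcases eq_or_lt_of_le h12 with rfl | h12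
    · exact le_rfl
    obtain ⟨p₁, _, hp₁, _, hp₁lt, _⟩ := hnbhd r₁ h1
    obtain ⟨_, q₂, _, hq₂, _, hq₂gt⟩ := hnbhd r₂ h2
    rw [hWLeq r₁ h1, hWLeq r₂ h2]
    exact cdAux_rd_anti hLconc ⟨p₁, hp₁, rfl⟩ ⟨r₁, h1, rfl⟩ ⟨r₂, h2, rfl⟩ ⟨q₂, hq₂, rfl⟩
      (hσ hp₁lt) (hσ h12) (hσ hq₂gt)
  have hw_anti : ∀ r₁ ∈ I, ∀ r₂ ∈ I, r₁ ≤ r₂ → w r₂ ≤ w r₁ := by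
    intro r₁ h1 r₂ h2 h12
    rcases eq_or_lt_of_le h12 with rfl | h12
    · exact le_rfl
    obtain ⟨p₁, _, hp₁, _, hp₁lt, _⟩ := hnbhd r₁ h1
    obtain ⟨_, q₂, _, hq₂, _, hq₂gt⟩ := hnbhd r₂ h2
    rw [hwr r₁, hwr r₂]
    exact cdAux_rd_anti hconc ⟨p₁, hp₁, rfl⟩ ⟨r₁, h1, rfl⟩ ⟨r₂, h2, rfl⟩ ⟨q₂, hq₂, rfl⟩
      (hσ hp₁lt) (hσ h12) (hσ hq₂gt)
  -- the clamp to [x,y]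
  set c : ℝ → ℝ := fun r => max x (min r y) with hc_def
  have hc_mem : ∀ r, c r ∈ Set.Icc x y :=
    fun r => ⟨le_max_left _ _, max_le hxy.le (min_le_right _ _)⟩
  have hc_mono : Monotone c := fun r₁ r₂ h12 => max_le_max le_rfl (min_le_min h12 le_rfl)
  have hc_eq : ∀ r ∈ Set.Icc x y, c r = r := by
    intro r hr
    show max x (min r y) = r
    rw [min_eq_left hr.2, max_eq_right hr.1]
  set K : ℝ → ℝ := fun r => (a (c r) - a y) * Real.exp (-(2 * l * c r)) with hK_def
  have hK_anti : Antitone K := by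
    intro r₁ r₂ h12
    have h1 := hc_mem r₁; have h2 := hc_mem r₂
    have hc12 : c r₁ ≤ c r₂ := hc_mono h12
    have hI1 : c r₁ ∈ I := hIcc h1; have hI2 : c r₂ ∈ I := hIcc h2
    have ha2 : a y ≤ a (c r₂) := ha_anti (c r₂) hI2 y hy h2.2
    have ha12 : a (c r₂) ≤ a (c r₁) := ha_anti _ hI1 _ hI2 hc12
    have hexp : Real.exp (-(2 * l * c r₂)) ≤ Real.exp (-(2 * l * c r₁)) :=
      Real.exp_le_exp.2 (by nlinarith)
    show (a (c r₂) - a y) * Real.exp (-(2 * l * c r₂)) ≤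
      (a (c r₁) - a y) * Real.exp (-(2 * l * c r₁))
    exact mul_le_mul (by linarith) hexp (Real.exp_pos _).le (by linarith)
  have hG_mono : Monotone (fun r => -(K r)) := fun r₁ r₂ h12 => neg_le_neg (hK_anti h12)
  obtain ⟨G', hG'0, hG'meas, hG'ae, hG'int⟩ := cdAux_mono_ftc hG_mono
  have hwt_mono : Monotone (fun r => -(w (c r))) := by
    intro r₁ r₂ h12
    have := hw_anti (c r₁) (hIcc (hc_mem r₁)) (c r₂) (hIcc (hc_mem r₂)) (hc_mono h12)
    dsimp only
    linarith
  obtain ⟨q, hq0, hqmeas, hqae, _⟩ := cdAux_mono_ftc hwt_mono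
  -- monotonicity of E - w y * chart on [x,y]
  have hslope_bound : ∀ r₁ ∈ Set.Icc x y, ∀ r₂ ∈ Set.Icc x y, r₁ < r₂ →
      w y * (cdChart l r₂ - cdChart l r₁) ≤ cdE l g r₂ - cdE l g r₁ := by
    intro r₁ h1 r₂ h2 h12
    have hI1 := hIcc h1; have hI2 := hIcc h2
    have hv12 : cdChart l r₁ < cdChart l r₂ := hσ h12
    obtain ⟨_, qy, _, hqy, _, hqygt⟩ := hnbhd y hy
    have hr1y : r₁ < y := lt_of_lt_of_le h12 h2.2
    have key : w y ≤ slope (cdPhi l g) (cdChart l r₁) (cdChart l r₂) := by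
      have s1 : w y ≤ slope (cdPhi l g) (cdChart l y) (cdChart l r₁) := by
        rw [hwr y]
        exact cdAux_rd_le_slope_left hconc ⟨y, hy, rfl⟩ ⟨r₁, hI1, rfl⟩ (hσ hr1y) ⟨qy, hqy, rfl⟩
          (hσ hqygt)
      rw [slope_comm] at s1
      refine s1.trans ?_
      exact cdAux_slope_anti hconc ⟨r₁, hI1, rfl⟩ ⟨⟨r₂, hI2, rfl⟩, by simp [(hσ h12).ne']⟩
        ⟨⟨y, hy, rfl⟩, by simp [(hσ hr1y).ne']⟩ (hσ.le_iff_le.2 h2.2)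
    rw [slope_def_field] at key
    have hkey2 := (le_div_iff₀ (by linarith)).1 key
    rw [hE, hE] at hkey2
    linarith
  have hME_mono : Monotone (fun r => cdE l g (c r) - w y * cdChart l (c r)) := by
    intro r₁ r₂ h12
    have hc12 := hc_mono h12
    rcases eq_or_lt_of_le hc12 with heq | hlt
    · simp only [heq]; exact le_rfl
    · have := hslope_bound (c r₁) (hc_mem r₁) (c r₂) (hc_mem r₂) hlt
      simp only
      linarith
  obtain ⟨m', hm'0, hm'meas, hMEae, hm'int⟩ := cdAux_mono_ftc hME_mono
  -- the (clamped) Riccati-type function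
  set u : ℝ → ℝ := fun r => l + a (c r) * Real.exp (-(2 * l * c r)) with hu_def
  have hu_eqI : ∀ r ∈ Set.Icc x y, u r = l + a r * Real.exp (-(2 * l * r)) := by
    intro r hr
    show l + a (c r) * Real.exp (-(2 * l * c r)) = _
    rw [hc_eq r hr]
  -- the pointwise a.e. differential inequality
  have hkey : ∀ᵐ r ∂(volume.restrict (Set.Ioo x y)),
      -(G' r) ≤ (l ^ 2 - (u r) ^ 2) + 2 * l * a y * Real.exp (-(2 * l * r)) := by
    filter_upwards [ae_restrict_of_ae hG'ae, ae_restrict_of_ae hqae, ae_restrict_of_ae hMEae,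
      ae_restrict_mem measurableSet_Ioo] with r hG'r hqr hMEr hr
    have hrI : r ∈ I := hIcc ⟨hr.1.le, hr.2.le⟩
    have hUnb : Set.Ioo x y ∈ 𝓝 r := isOpen_Ioo.mem_nhds hr
    have hcr : ∀ᶠ s in 𝓝 r, c s = s := by
      filter_upwards [hUnb] with s hs
      exact hc_eq s ⟨hs.1.le, hs.2.le⟩
    -- E has derivative w r * exp (-(2 l r)) at r
    have hMEder : HasDerivAt (fun s => cdE l g s - w y * cdChart l s) (m' r) r := by
      apply hMEr.congr_of_eventuallyEq
      filter_upwards [hcr] with s hs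
      simp only [hs]
    have hEder0 : HasDerivAt (cdE l g) (m' r + w y * Real.exp (-(2 * l * r))) r := by
      have h2 := hMEder.fun_add ((cdChart_hasDerivAt hl r).const_mul (w y))
      have h3 : (fun s => (cdE l g s - w y * cdChart l s) + w y * cdChart l s) = cdE l g := by
        funext s; ring
      rwa [h3] at h2
    have hEval : m' r + w y * Real.exp (-(2 * l * r)) = w r * Real.exp (-(2 * l * r)) :=
      (uniqueDiffWithinAt_Ioi r).eq_deriv _ hEder0.hasDerivWithinAt (hEd r hrI)
    rw [hEval] at hEder0
    -- w has derivative -(q r) at r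
    have hwder : HasDerivAt w (-(q r)) r := by
      have h1 : HasDerivAt (fun s => -(-(w (c s)))) (-(q r)) r := hqr.neg
      have h2 : HasDerivAt (fun s => w (c s)) (-(q r)) r := by
        simpa using h1
      apply h2.congr_of_eventuallyEq
      filter_upwards [hcr] with s hs
      rw [hs]
    -- derivative of a
    have hader : HasDerivAt a
        ((-(q r) * cdE l g r - w r * (w r * Real.exp (-(2 * l * r)))) / (cdE l g r) ^ 2) r :=
      hwder.div hEder0 (hEpos r hrI).ne'
    -- derivative of K at r
    have hexpder : HasDerivAt (fun s : ℝ => Real.exp (-(2 * l * s)))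
        (Real.exp (-(2 * l * r)) * -(2 * l)) r := by
      have hi : HasDerivAt (fun s : ℝ => -(2 * l * s)) (-(2 * l)) r := by
        simpa using ((hasDerivAt_id r).const_mul (2 * l)).fun_neg
      exact (Real.hasDerivAt_exp _).comp r hi
    have h5 := (hader.sub_const (a y)).fun_mul hexpder
    have hKder : HasDerivAt K
        ((-(q r) * cdE l g r - w r * (w r * Real.exp (-(2 * l * r)))) / (cdE l g r) ^ 2 *
          Real.exp (-(2 * l * r)) + (a r - a y) * (Real.exp (-(2 * l * r)) * -(2 * l))) r := by
      apply h5.congr_of_eventuallyEq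
      filter_upwards [hcr] with s hs
      show (a (c s) - a y) * Real.exp (-(2 * l * c s)) = _
      rw [hs]
    have hKG : HasDerivAt K (-(G' r)) r := by
      have h6 : HasDerivAt (fun s => -(-(K s))) (-(G' r)) r := hG'r.neg
      simpa using h6
    have heqd := hKder.unique hKG
    -- conclude the pointwise inequality
    have hEr : 0 < cdE l g r := hEpos r hrI
    have he : 0 < Real.exp (-(2 * l * r)) := Real.exp_pos _
    have haw : a r = w r / cdE l g r := rfl
    have ha'eq : (-(q r) * cdE l g r - w r * (w r * Real.exp (-(2 * l * r)))) / (cdE l g r) ^ 2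
        = -(q r) / cdE l g r - (a r) ^ 2 * Real.exp (-(2 * l * r)) := by
      rw [haw]
      field_simp
    have hterm : -(q r) / cdE l g r * Real.exp (-(2 * l * r)) ≤ 0 :=
      mul_nonpos_of_nonpos_of_nonneg
        (div_nonpos_of_nonpos_of_nonneg (neg_nonpos_of_nonneg (hq0 r)) hEr.le) he.le
    have hstep : -(G' r) = -(q r) / cdE l g r * Real.exp (-(2 * l * r)) +
        (-((a r) ^ 2 * Real.exp (-(2 * l * r))) * Real.exp (-(2 * l * r)) +
          (a r - a y) * (Real.exp (-(2 * l * r)) * -(2 * l))) := by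
      rw [← heqd, ha'eq]; ring
    have huval : u r = l + a r * Real.exp (-(2 * l * r)) := hu_eqI r ⟨hr.1.le, hr.2.le⟩
    have hring : -((a r) ^ 2 * Real.exp (-(2 * l * r))) * Real.exp (-(2 * l * r)) +
        (a r - a y) * (Real.exp (-(2 * l * r)) * -(2 * l)) =
        (l ^ 2 - (l + a r * Real.exp (-(2 * l * r))) ^ 2) +
          2 * l * a y * Real.exp (-(2 * l * r)) := by ring
    rw [hstep, huval, hring]
    linarith
  -- integrability facts
  have hc_cont : Continuous c := continuous_const.max (continuous_id.min continuous_const)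
  have hac_anti : Antitone (fun r => a (c r)) := fun r₁ r₂ h12 =>
    ha_anti _ (hIcc (hc_mem r₁)) _ (hIcc (hc_mem r₂)) (hc_mono h12)
  have humeas : Measurable u := by
    apply measurable_const.add
    apply hac_anti.measurable.mul
    exact (Real.continuous_exp.comp ((continuous_const.mul hc_cont : Continuous fun r : ℝ => 2 * l * c r).neg)).measurable
  set B : ℝ := |l| + (|a x| + |a y|) * Real.exp (2 * l * (|x| + |y|)) with hB_def
  have hubd : ∀ r, |u r| ≤ B := by
    intro r
    have h1 := hc_mem r
    have ha_up : a (c r) ≤ a x := ha_anti x hx _ (hIcc h1) h1.1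
    have ha_lo : a y ≤ a (c r) := ha_anti _ (hIcc h1) y hy h1.2
    have habs : |a (c r)| ≤ |a x| + |a y| := by
      rw [abs_le]
      constructor
      · have := neg_abs_le (a y)
        have := abs_nonneg (a x)
        linarith
      · have := le_abs_self (a x)
        have := abs_nonneg (a y)
        linarith
    have h2 : |c r| ≤ |x| + |y| := by
      rw [abs_le]
      have := neg_abs_le x
      have := le_abs_self y
      have := abs_nonneg x
      have := abs_nonneg y
      constructor <;> [linarith [h1.1]; linarith [h1.2]]
    have hexp : Real.exp (-(2 * l * c r)) ≤ Real.exp (2 * l * (|x| + |y|)) := by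
      apply Real.exp_le_exp.2
      have h3 := neg_abs_le (c r)
      nlinarith
    have h4 : |u r| ≤ |l| + |a (c r)| * Real.exp (-(2 * l * c r)) := by
      show |l + a (c r) * Real.exp (-(2 * l * c r))| ≤ _
      refine (abs_add_le _ _).trans ?_
      rw [abs_mul, abs_of_pos (Real.exp_pos _)]
    refine h4.trans ?_
    have h5 : |a (c r)| * Real.exp (-(2 * l * c r)) ≤
        (|a x| + |a y|) * Real.exp (2 * l * (|x| + |y|)) :=
      mul_le_mul habs hexp (Real.exp_pos _).le (by positivity)
    rw [hB_def]
    linarith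
  have hconst_int : ∀ C : ℝ, IntegrableOn (fun _ : ℝ => C) (Set.Ioo x y) :=
    fun C => integrableOn_const measure_Ioo_lt_top.ne
  have hu_int : IntegrableOn u (Set.Ioo x y) := by
    refine Integrable.mono' (hconst_int B) humeas.aestronglyMeasurable ?_
    exact Filter.Eventually.of_forall fun r => by simpa [Real.norm_eq_abs] using hubd r
  have hu2_int : IntegrableOn (fun r => (u r) ^ 2) (Set.Ioo x y) := by
    refine Integrable.mono' (hconst_int (B ^ 2)) (humeas.pow_const 2).aestronglyMeasurable ?_
    refine Filter.Eventually.of_forall fun r => ?_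
    have h1 := hubd r
    have h2 := abs_nonneg (u r)
    calc |(u r) ^ 2| = |u r| ^ 2 := by rw [abs_pow]
      _ ≤ B ^ 2 := by nlinarith
  have hexp_cont : Continuous fun r : ℝ => 2 * l * a y * Real.exp (-(2 * l * r)) :=
    continuous_const.mul (Real.continuous_exp.comp ((continuous_const.mul continuous_id : Continuous fun r : ℝ => 2 * l * r).neg))
  have hexp_int : IntegrableOn (fun r : ℝ => 2 * l * a y * Real.exp (-(2 * l * r)))
      (Set.Ioo x y) := (hexp_cont.integrableOn_Icc).mono_set Set.Ioo_subset_Icc_self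
  have hl2u2_int : IntegrableOn (fun r => l ^ 2 - (u r) ^ 2) (Set.Ioo x y) :=
    (hconst_int (l ^ 2)).sub hu2_int
  have hRHS_int : IntegrableOn
      (fun r => (l ^ 2 - (u r) ^ 2) + 2 * l * a y * Real.exp (-(2 * l * r))) (Set.Ioo x y) :=
    hl2u2_int.add hexp_int
  -- the integral inequality
  have hGineq := (hG'int x y hxy.le).2
  have hG'int1 := (hG'int x y hxy.le).1
  have hGineq' : ∫ r in Set.Ioo x y, G' r ≤ -(K y) - -(K x) := by simpa using hGineq
  have hKxy : K y - K x ≤ ∫ r in Set.Ioo x y, -(G' r) := by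
    rw [integral_neg]
    linarith
  have hmono := integral_mono_ae hG'int1.neg hRHS_int hkey
  have hexp_eval : ∫ r in Set.Ioo x y, 2 * l * a y * Real.exp (-(2 * l * r)) =
      a y * (Real.exp (-(2 * l * x)) - Real.exp (-(2 * l * y))) := by
    have hFTC : ∫ r in x..y, 2 * l * a y * Real.exp (-(2 * l * r)) =
        (-(a y) * Real.exp (-(2 * l * y))) - (-(a y) * Real.exp (-(2 * l * x))) := by
      have := intervalIntegral.integral_eq_sub_of_hasDerivAt
        (f := fun s : ℝ => -(a y) * Real.exp (-(2 * l * s)))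
        (f' := fun s : ℝ => 2 * l * a y * Real.exp (-(2 * l * s)))
        (a := x) (b := y) ?_ ((hexp_cont).intervalIntegrable x y)
      · exact this
      · intro t _
        have hi : HasDerivAt (fun s : ℝ => -(2 * l * s)) (-(2 * l)) t := by
          simpa using ((hasDerivAt_id t).const_mul (2 * l)).fun_neg
        have h8 := ((Real.hasDerivAt_exp (-(2 * l * t))).comp t hi).const_mul (-(a y))
        refine h8.congr_deriv ?_
        ring
    rw [intervalIntegral.integral_of_le hxy.le, integral_Ioc_eq_integral_Ioo] at hFTC
    rw [hFTC]; ring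
  have hconst_eval : ∫ _ in Set.Ioo x y, (l ^ 2 : ℝ) = (y - x) * l ^ 2 := by
    rw [setIntegral_const, measureReal_def, Real.volume_Ioo, ENNReal.toReal_ofReal (by linarith), smul_eq_mul]
  have hsub_eval : ∫ r in Set.Ioo x y, (l ^ 2 - (u r) ^ 2) =
      (y - x) * l ^ 2 - ∫ r in Set.Ioo x y, (u r) ^ 2 := by
    rw [integral_sub (hconst_int (l ^ 2)) hu2_int, hconst_eval]
  have hsplit : ∫ r in Set.Ioo x y,
      ((l ^ 2 - (u r) ^ 2) + 2 * l * a y * Real.exp (-(2 * l * r))) =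
      ((y - x) * l ^ 2 - ∫ r in Set.Ioo x y, (u r) ^ 2) +
        a y * (Real.exp (-(2 * l * x)) - Real.exp (-(2 * l * y))) := by
    rw [integral_add hl2u2_int hexp_int, hexp_eval, hsub_eval]
  have hcy : c y = y := hc_eq y ⟨hxy.le, le_rfl⟩
  have hcx : c x = x := hc_eq x ⟨le_rfl, hxy.le⟩
  have huxy : u y - u x = (K y - K x) +
      a y * (Real.exp (-(2 * l * y)) - Real.exp (-(2 * l * x))) := by
    show (l + a (c y) * Real.exp (-(2 * l * c y))) - (l + a (c x) * Real.exp (-(2 * l * c x)))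
      = ((a (c y) - a y) * Real.exp (-(2 * l * c y)) -
          (a (c x) - a y) * Real.exp (-(2 * l * c x))) + _
    rw [hcx, hcy]
    ring
  have hmain : (u y - u x) + ∫ r in Set.Ioo x y, (u r) ^ 2 ≤ l ^ 2 * (y - x) := by
    have h9 : ∫ r in Set.Ioo x y, -(G' r) ≤ _ := hmono
    rw [hsplit] at h9
    linarith [hKxy, huxy.le, huxy.ge, h9]
  -- convert to the statement about D
  have hDint : ∫ r in x..y, (D r) ^ 2 = (N - 1) ^ 2 * ∫ r in Set.Ioo x y, (u r) ^ 2 := by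
    rw [intervalIntegral.integral_of_le hxy.le, integral_Ioc_eq_integral_Ioo]
    rw [← integral_const_mul]
    apply setIntegral_congr_fun measurableSet_Ioo
    intro r hr
    have h10 : u r = l + a r * Real.exp (-(2 * l * r)) := hu_eqI r ⟨hr.1.le, hr.2.le⟩
    show (D r) ^ 2 = (N - 1) ^ 2 * (u r) ^ 2
    rw [h10, hDr r]
    ring
  have hDyx : D y - D x = (N - 1) * (u y - u x) := by
    have h11 : u y = l + a y * Real.exp (-(2 * l * y)) := hu_eqI y ⟨hxy.le, le_rfl⟩
    have h12 : u x = l + a x * Real.exp (-(2 * l * x)) := hu_eqI x ⟨le_rfl, hxy.le⟩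
    rw [h11, h12, hDr y, hDr x]
    ring
  have hNe : (N - 1 : ℝ) ≠ 0 := hN1.ne'
  calc D y - D x + (1 / (N - 1)) * ∫ r in x..y, (D r) ^ 2
      = (N - 1) * ((u y - u x) + ∫ r in Set.Ioo x y, (u r) ^ 2) := by
        rw [hDint, hDyx]
        field_simp
        try ring
    _ ≤ (N - 1) * (l ^ 2 * (y - x)) := mul_le_mul_of_nonneg_left hmain hN1.le
    _ = -κ * (y - x) := by
        rw [hlsq]
        field_simp
        try ring
end

section
/- Let N > 1 be real and let h be a CD(0,N) density on the compact interval [a,b], where a ≤ 0 < b, such that h is positive at every point of [a,b). Assume the right derivative H := (log∘h)'⁺(0) exists in ℝ. Then for every t ∈ (0,b] one has ∫_{(0,t)} h(θ) dθ ≤ h(0) · ∫₀ᵗ max(1 + H·θ/(N−1), 0)^{N−1} dθ, where the integrals are Lebesgue integrals. -/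
open Set MeasureTheory

/-- A `CD(0,N)` density on the set `I ⊆ ℝ`: a nonnegative function whose
`(N-1)`-st root is concave, stated via the defining inequality. -/
def IsCDZeroDensity (N : ℝ) (I : Set ℝ) (h : ℝ → ℝ) : Prop :=
  (∀ x ∈ I, 0 ≤ h x) ∧
    ∀ x₀ ∈ I, ∀ x₁ ∈ I, ∀ t ∈ Set.Icc (0 : ℝ) 1,
      (1 - t) * h x₀ ^ (1 / (N - 1)) + t * h x₁ ^ (1 / (N - 1)) ≤
        h ((1 - t) * x₀ + t * x₁) ^ (1 / (N - 1))

/-- One-dimensional Heintze–Karcher-type inequality along a transport ray with zero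
curvature parameter: if `h` is a `CD(0,N)` density on `[a,b]` (`a ≤ 0 < b`), positive
on `[a,b)`, with right logarithmic derivative `H` at `0`, then for `t ∈ (0,b]` the
integral of `h` over `(0,t)` is bounded by `h(0)·∫₀ᵗ (1 + Hθ/(N-1))₊^{N-1} dθ`. -/
theorem cd_zero_density_heintze_karcher (N a b H : ℝ) (h : ℝ → ℝ)
    (hN : 1 < N) (ha : a ≤ 0) (hb : 0 < b)
    (hCD : IsCDZeroDensity N (Set.Icc a b) h)
    (hpos : ∀ x ∈ Set.Ico a b, 0 < h x)
    (hH : HasDerivWithinAt (fun y => Real.log (h y)) H (Set.Ioi 0) 0) :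
    ∀ t ∈ Set.Ioc 0 b,
      ∫ θ in Set.Ioo 0 t, h θ ≤
        h 0 * ∫ θ in (0:ℝ)..t, (max (1 + H * θ / (N - 1)) 0) ^ (N - 1) := by
  obtain ⟨hnn, hineq⟩ := hCD
  have hM0 : (0:ℝ) < N - 1 := by linarith
  set g : ℝ → ℝ := fun x => h x ^ (1 / (N - 1)) with hgdef
  -- g is concave on [a,b]
  have hgconc : ConcaveOn ℝ (Icc a b) g := by
    refine ⟨convex_Icc a b, fun x hx y hy s u hs hu hsu => ?_⟩
    have h1 : s = 1 - u := by linarith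
    subst h1
    simpa [smul_eq_mul, hgdef] using hineq x hx y hy u ⟨hu, by linarith⟩
  have h0mem : (0:ℝ) ∈ Ico a b := ⟨ha, hb⟩
  have hh0 : 0 < h 0 := hpos 0 h0mem
  have hg0 : 0 < g 0 := Real.rpow_pos_of_pos hh0 _
  -- right derivative of g at 0
  set d : ℝ := g 0 * (H * (1 / (N - 1))) with hddef
  have hgd : HasDerivWithinAt g d (Ioo 0 b) 0 := by
    have h1 : HasDerivWithinAt (fun y => Real.log (h y) * (1 / (N - 1)))
        (H * (1 / (N - 1))) (Ioi 0) 0 := hH.mul_const _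
    have h2 : HasDerivWithinAt (fun y => Real.exp (Real.log (h y) * (1 / (N - 1))))
        (Real.exp (Real.log (h 0) * (1 / (N - 1))) * (H * (1 / (N - 1)))) (Ioi 0) 0 := h1.exp
    have hexp0 : Real.exp (Real.log (h 0) * (1 / (N - 1))) = g 0 :=
      (Real.rpow_def_of_pos hh0 _).symm
    rw [hexp0] at h2
    refine (h2.mono Ioo_subset_Ioi_self).congr (fun y hy => ?_) ?_
    · exact Real.rpow_def_of_pos (hpos y ⟨by linarith [hy.1], hy.2⟩) _
    · exact Real.rpow_def_of_pos hh0 _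
  -- linear upper bound from concavity
  have hkey : ∀ θ ∈ Ioc (0:ℝ) b, g θ ≤ g 0 + d * θ := by
    intro θ hθ
    have hslope : (g θ - g 0) / θ ≤ d := by
      have hT : Filter.Tendsto (slope g 0) (nhdsWithin 0 (Ioo 0 b \ {0})) (nhds d) :=
        hasDerivWithinAt_iff_tendsto_slope.mp hgd
      have hne : (nhdsWithin (0:ℝ) (Ioo 0 b \ {0})).NeBot := by
        rw [diff_singleton_eq_self (by simp), nhdsWithin_Ioo_eq_nhdsGT hb]
        infer_instance
      refine ge_of_tendsto hT ?_
      have hev : ∀ᶠ τ in nhdsWithin (0:ℝ) (Ioo 0 b \ {0}), τ ∈ Ioo (0:ℝ) θ := by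
        filter_upwards [self_mem_nhdsWithin,
          eventually_nhdsWithin_of_eventually_nhds (eventually_lt_nhds hθ.1)] with τ h1 h2
        exact ⟨h1.1.1, h2⟩
      filter_upwards [hev] with τ hτ
      have hcv : ConvexOn ℝ (Icc a b) (-g) := hgconc.neg
      have hτm : τ ∈ Icc a b := ⟨by linarith [hτ.1], by linarith [hτ.2, hθ.2]⟩
      have hθm : θ ∈ Icc a b := ⟨by linarith [hθ.1], hθ.2⟩
      have := hcv.secant_mono (a := 0) (x := τ) (y := θ) ⟨ha, hb.le⟩ hτm hθm
        (ne_of_gt hτ.1) (ne_of_gt hθ.1) hτ.2.le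
      have hτ0 : (0:ℝ) < τ := hτ.1
      have hθ0 : (0:ℝ) < θ := hθ.1
      simp only [Pi.neg_apply, slope_def_field, sub_zero] at this ⊢
      rw [div_le_div_iff₀ hτ0 hθ0] at this
      rw [div_le_div_iff₀ hθ0 hτ0]
      nlinarith [this]
    have hθ0 : (0:ℝ) < θ := hθ.1
    rw [div_le_iff₀ hθ0] at hslope
    linarith [hslope]
  -- pointwise bound
  set F : ℝ → ℝ := fun θ => h 0 * max (1 + H * θ / (N - 1)) 0 ^ (N - 1) with hFdef
  have hpt : ∀ θ ∈ Ioc (0:ℝ) b, h θ ≤ F θ := by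
    intro θ hθ
    have hθm : θ ∈ Icc a b := ⟨by linarith [hθ.1], hθ.2⟩
    have hhθ : 0 ≤ h θ := hnn θ hθm
    have hgθ : 0 ≤ g θ := Real.rpow_nonneg hhθ _
    have h1 : h θ = g θ ^ (N - 1) := by
      simp only [hgdef]
      rw [← Real.rpow_mul hhθ, one_div, inv_mul_cancel₀ (ne_of_gt hM0), Real.rpow_one]
    have h2 : g θ ≤ max (g 0 + d * θ) 0 := le_max_of_le_left (hkey θ hθ)
    have h3 : g θ ^ (N - 1) ≤ (max (g 0 + d * θ) 0) ^ (N - 1) :=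
      Real.rpow_le_rpow hgθ h2 hM0.le
    have h4 : max (g 0 + d * θ) 0 = g 0 * max (1 + H * θ / (N - 1)) 0 := by
      rw [mul_max_of_nonneg _ _ hg0.le, mul_zero]
      congr 1
      rw [hddef]
      field_simp
    have h5 : g 0 ^ (N - 1) = h 0 := by
      simp only [hgdef]
      rw [← Real.rpow_mul hh0.le, one_div, inv_mul_cancel₀ (ne_of_gt hM0), Real.rpow_one]
    rw [h1, hFdef]
    calc g θ ^ (N - 1) ≤ (g 0 * max (1 + H * θ / (N - 1)) 0) ^ (N - 1) := by
          rw [← h4]; exact h3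
      _ = g 0 ^ (N - 1) * max (1 + H * θ / (N - 1)) 0 ^ (N - 1) :=
          Real.mul_rpow hg0.le (le_max_right _ _)
      _ = h 0 * max (1 + H * θ / (N - 1)) 0 ^ (N - 1) := by rw [h5]
  -- integration
  intro t ht
  have hFcont : Continuous F := by
    have h1 : Continuous fun x : ℝ => x ^ (N - 1) :=
      continuous_iff_continuousAt.mpr fun x => Real.continuousAt_rpow_const x _ (Or.inr hM0.le)
    exact continuous_const.mul (h1.comp ((continuous_const.add
      ((continuous_const.mul continuous_id).div_const _)).max continuous_const))
  have hFint : IntegrableOn F (Ioo 0 t) :=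
    (hFcont.integrableOn_Icc (a := 0) (b := t)).mono_set Ioo_subset_Icc_self
  have hsub : Ioo (0:ℝ) t ⊆ Ioc 0 b := fun x hx => ⟨hx.1, le_of_lt (lt_of_lt_of_le hx.2 ht.2)⟩
  have hmain : ∫ θ in Ioo (0:ℝ) t, h θ ≤ ∫ θ in Ioo (0:ℝ) t, F θ := by
    refine integral_mono_of_nonneg ?_ hFint ?_
    · filter_upwards [ae_restrict_mem measurableSet_Ioo] with θ hθ
      exact hnn θ ⟨by linarith [(hsub hθ).1], (hsub hθ).2⟩
    · filter_upwards [ae_restrict_mem measurableSet_Ioo] with θ hθ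
      exact hpt θ (hsub hθ)
  calc ∫ θ in Ioo (0:ℝ) t, h θ ≤ ∫ θ in Ioo (0:ℝ) t, F θ := hmain
    _ = h 0 * ∫ θ in Ioo (0:ℝ) t, max (1 + H * θ / (N - 1)) 0 ^ (N - 1) := by
        rw [hFdef]; exact integral_const_mul _ _
    _ = h 0 * ∫ θ in (0:ℝ)..t, max (1 + H * θ / (N - 1)) 0 ^ (N - 1) := by
        rw [intervalIntegral.integral_of_le ht.1.le, integral_Ioc_eq_integral_Ioo]
end

section
/- Let κ < 0 and N > 1 be real, let (a,b) be a nonempty bounded open real interval, and let h be an MCP(κ,N) density on (a,b). Then: (i) either h(x) = 0 for all x ∈ (a,b), or h(x) > 0 for all x ∈ (a,b); (ii) h is locally Lipschitz continuous on (a,b); and (iii) h has finite one-sided limits at a from the right and at b from the left, so h extends to a continuous function on [a,b]. -/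
open Set Filter

/-- Elementary linear bound on increments of `sinh`. -/
lemma mcp_aux_sinh_sub_le (A u : ℝ) (hu : 0 ≤ u) (huA : u ≤ A) :
    Real.sinh A - Real.sinh (A - u) ≤ Real.exp (2 * A) * u := by
  have hB : 0 ≤ A - u := by linarith
  have e2 : Real.sinh A = Real.sinh (A - u) * Real.cosh u + Real.cosh (A - u) * Real.sinh u := by
    have := Real.sinh_add (A - u) u
    rw [sub_add_cancel] at this
    exact this
  have h3 : Real.cosh u - 1 ≤ Real.sinh u := by
    have h1 := Real.cosh_sub_sinh u
    have h4 : Real.exp (-u) ≤ 1 := by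
      rw [show (1:ℝ) = Real.exp 0 by simp]
      exact Real.exp_le_exp.mpr (by linarith)
    linarith
  have h5 : Real.sinh u ≤ u * Real.exp u := by
    have h6 : 1 - 2 * u ≤ Real.exp (-(2 * u)) := by
      have := Real.add_one_le_exp (-(2 * u)); linarith
    have h7 : Real.exp (-u) = Real.exp u * Real.exp (-(2 * u)) := by
      rw [← Real.exp_add]; ring_nf
    rw [Real.sinh_eq, h7]
    have hpos : 0 < Real.exp u := Real.exp_pos u
    nlinarith
  have hsinhB : 0 ≤ Real.sinh (A - u) := Real.sinh_nonneg_iff.mpr hB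
  have hsinhu : 0 ≤ Real.sinh u := Real.sinh_nonneg_iff.mpr hu
  have hcoshB : Real.sinh (A - u) + Real.cosh (A - u) = Real.exp (A - u) := Real.sinh_add_cosh _
  have hcoshBpos : 0 < Real.cosh (A - u) := Real.cosh_pos _
  have step1 : Real.sinh A - Real.sinh (A - u) ≤ Real.exp (A - u) * Real.sinh u := by
    rw [e2]; nlinarith
  have hEB : Real.exp (A - u) ≤ Real.exp A := Real.exp_le_exp.mpr (by linarith)
  have hEu : Real.exp u ≤ Real.exp A := Real.exp_le_exp.mpr huA
  have hEA : 0 < Real.exp A := Real.exp_pos A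
  have hE2 : Real.exp (2 * A) = Real.exp A * Real.exp A := by
    rw [← Real.exp_add]; ring_nf
  have step2 : Real.exp (A - u) * Real.sinh u ≤ Real.exp A * (u * Real.exp u) := by
    have h8 : Real.exp (A - u) * Real.sinh u ≤ Real.exp A * Real.sinh u := by
      apply mul_le_mul_of_nonneg_right hEB hsinhu
    have h9 : Real.exp A * Real.sinh u ≤ Real.exp A * (u * Real.exp u) :=
      mul_le_mul_of_nonneg_left h5 hEA.le
    linarith
  have step3 : Real.exp A * (u * Real.exp u) ≤ Real.exp (2 * A) * u := by
    rw [hE2]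
    have h10 : u * Real.exp u ≤ u * Real.exp A := mul_le_mul_of_nonneg_left hEu hu
    calc Real.exp A * (u * Real.exp u) ≤ Real.exp A * (u * Real.exp A) :=
          mul_le_mul_of_nonneg_left h10 hEA.le
      _ = Real.exp A * Real.exp A * u := by ring
  linarith

/-- An `MCP(κ,N)` density on the set `I ⊆ ℝ`, for a constant negative curvature
parameter `κ`, with the explicit hyperbolic distortion coefficients. -/
def IsMCPNegDensity (κ N : ℝ) (I : Set ℝ) (h : ℝ → ℝ) : Prop :=
  (∀ x ∈ I, 0 ≤ h x) ∧
    ∀ x₀ ∈ I, ∀ x₁ ∈ I, x₀ ≠ x₁ → ∀ t ∈ Set.Icc (0 : ℝ) 1,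
      Real.sinh (Real.sqrt (-κ / (N - 1)) * ((1 - t) * |x₁ - x₀|)) /
          Real.sinh (Real.sqrt (-κ / (N - 1)) * |x₁ - x₀|) * h x₀ ^ (1 / (N - 1)) ≤
        h ((1 - t) * x₀ + t * x₁) ^ (1 / (N - 1))

/-- Point form of the MCP inequality: for `y` in the segment between `x₀` and `x₁`. -/
lemma mcp_aux_key {κ N : ℝ} {I : Set ℝ} {h : ℝ → ℝ}
    (hMCP : IsMCPNegDensity κ N I h) {x₀ x₁ y : ℝ}
    (h₀ : x₀ ∈ I) (h₁ : x₁ ∈ I) (hne : x₀ ≠ x₁) (hy : y ∈ Set.uIcc x₀ x₁) :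
    Real.sinh (Real.sqrt (-κ / (N - 1)) * |x₁ - y|) /
        Real.sinh (Real.sqrt (-κ / (N - 1)) * |x₁ - x₀|) * h x₀ ^ (1 / (N - 1)) ≤
      h y ^ (1 / (N - 1)) := by
  have hd : x₁ - x₀ ≠ 0 := sub_ne_zero.mpr (Ne.symm hne)
  set t := (y - x₀) / (x₁ - x₀) with ht
  have htmem : t ∈ Set.Icc (0:ℝ) 1 := by
    rw [Set.mem_uIcc] at hy
    constructor
    · rcases hy with ⟨h1, h2⟩ | ⟨h1, h2⟩
      · apply div_nonneg (by linarith) (by linarith)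
      · rw [ht, show (y - x₀) / (x₁ - x₀) = (x₀ - y) / (x₀ - x₁) by
          rw [← neg_div_neg_eq]; ring_nf]
        apply div_nonneg (by linarith) (by linarith)
    · rcases hy with ⟨h1, h2⟩ | ⟨h1, h2⟩
      · have hlt : x₀ < x₁ := lt_of_le_of_ne (h1.trans h2) hne
        rw [ht, div_le_one (by linarith)]; linarith
      · rw [ht, show (y - x₀) / (x₁ - x₀) = (x₀ - y) / (x₀ - x₁) by
          rw [← neg_div_neg_eq]; ring_nf]
        have hlt : x₁ < x₀ := lt_of_le_of_ne (h1.trans h2) (Ne.symm hne)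
        rw [div_le_one (by linarith)]; linarith
  have hsum : (1 - t) * x₀ + t * x₁ = y := by
    rw [ht]; field_simp
    ring
  have habs : (1 - t) * |x₁ - x₀| = |x₁ - y| := by
    have h1t : 1 - t = (x₁ - y) / (x₁ - x₀) := by
      rw [ht]; field_simp; ring
    have hnn : 0 ≤ (x₁ - y) / (x₁ - x₀) := by rw [← h1t]; linarith [htmem.2]
    rw [h1t]
    rw [show |x₁ - y| = |(x₁ - y) / (x₁ - x₀)| * |x₁ - x₀| by
      rw [← abs_mul, div_mul_cancel₀ _ hd]]
    rw [abs_of_nonneg hnn]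
  have := hMCP.2 x₀ h₀ x₁ h₁ hne t htmem
  rwa [habs, hsum] at this

set_option maxHeartbeats 1600000

/-- Regularity of `MCP(κ,N)` densities (`κ < 0`) on a bounded open interval `(a,b)`:
either `h` vanishes identically or is everywhere positive; `h` is locally Lipschitz on
`(a,b)`; and `h` has finite one-sided limits at the endpoints, hence extends to a
continuous function on `[a,b]`. -/
theorem mcp_neg_density_regularity (κ N a b : ℝ) (h : ℝ → ℝ)
    (hκ : κ < 0) (hN : 1 < N) (hab : a < b)
    (hMCP : IsMCPNegDensity κ N (Set.Ioo a b) h) :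
    ((∀ x ∈ Set.Ioo a b, h x = 0) ∨ (∀ x ∈ Set.Ioo a b, 0 < h x)) ∧
    (∀ x ∈ Set.Ioo a b, ∃ K : NNReal, ∃ ε : ℝ, 0 < ε ∧
      LipschitzOnWith K h (Set.Ioo a b ∩ Metric.ball x ε)) ∧
    (∃ La Lb : ℝ,
      Filter.Tendsto h (nhdsWithin a (Set.Ioi a)) (nhds La) ∧
      Filter.Tendsto h (nhdsWithin b (Set.Iio b)) (nhds Lb)) ∧
    (∃ H : ℝ → ℝ, ContinuousOn H (Set.Icc a b) ∧ Set.EqOn H h (Set.Ioo a b)) := by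
  have hN1 : (0:ℝ) < N - 1 := by linarith
  set c := Real.sqrt (-κ / (N - 1)) with hcdef
  have hc : 0 < c := Real.sqrt_pos.mpr (div_pos (by linarith) hN1)
  have hp : 0 < 1 / (N - 1) := by positivity
  set g : ℝ → ℝ := fun z => h z ^ (1 / (N - 1)) with hgdef
  have gnn : ∀ z ∈ Ioo a b, 0 ≤ g z := fun z hz => Real.rpow_nonneg (hMCP.1 z hz) _
  have key' : ∀ x₀ ∈ Ioo a b, ∀ x₁ ∈ Ioo a b, x₀ ≠ x₁ → ∀ y ∈ Set.uIcc x₀ x₁,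
      Real.sinh (c * |x₁ - y|) * g x₀ ≤ Real.sinh (c * |x₁ - x₀|) * g y := by
    intro x₀ h₀ x₁ h₁ hne y hy
    have habs : 0 < |x₁ - x₀| := abs_pos.mpr (sub_ne_zero.mpr (Ne.symm hne))
    have hSpos : 0 < Real.sinh (c * |x₁ - x₀|) :=
      Real.sinh_pos_iff.mpr (mul_pos hc habs)
    have hk := mcp_aux_key hMCP h₀ h₁ hne hy
    rw [div_mul_eq_mul_div, div_le_iff₀ hSpos] at hk
    calc Real.sinh (c * |x₁ - y|) * g x₀ ≤ g y * Real.sinh (c * |x₁ - x₀|) := hk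
      _ = Real.sinh (c * |x₁ - x₀|) * g y := by ring
  -- the exponent-inversion identity
  have hgh : ∀ z ∈ Ioo a b, (g z) ^ (N - 1) = h z := by
    intro z hz
    rw [hgdef]
    simp only
    rw [← Real.rpow_mul (hMCP.1 z hz), one_div_mul_cancel (ne_of_gt hN1), Real.rpow_one]
  -- Part 1: dichotomy
  have hdich : (∀ x ∈ Set.Ioo a b, h x = 0) ∨ (∀ x ∈ Set.Ioo a b, 0 < h x) := by
    by_cases hz : ∀ x ∈ Set.Ioo a b, h x = 0
    · exact Or.inl hz
    · right
      push_neg at hz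
      obtain ⟨x₀, hx₀, hne0⟩ := hz
      have hpos0 : 0 < h x₀ := lt_of_le_of_ne (hMCP.1 x₀ hx₀) (Ne.symm hne0)
      have hgx0 : 0 < g x₀ := Real.rpow_pos_of_pos hpos0 _
      intro y hy
      rcases eq_or_ne y x₀ with rfl | hne
      · exact hpos0
      have hgy : 0 < g y := by
        rcases lt_or_gt_of_ne hne with hlt | hgt
        · -- y < x₀, take x₁ = (a+y)/2 < y
          have hx₁ : (a + y) / 2 ∈ Ioo a b :=
            ⟨by linarith [hy.1], by linarith [hy.1, hy.2]⟩
          have hx₁y : (a + y) / 2 < y := by linarith [hy.1]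
          have hyI : y ∈ Set.uIcc x₀ ((a + y) / 2) :=
            Set.mem_uIcc.mpr (Or.inr ⟨hx₁y.le, hlt.le⟩)
          have hk := key' x₀ hx₀ _ hx₁ (by intro hEq; rw [hEq] at hlt; linarith [hy.1]) y hyI
          have h1 : 0 < Real.sinh (c * |(a + y) / 2 - y|) := by
            apply Real.sinh_pos_iff.mpr
            apply mul_pos hc (abs_pos.mpr (by intro hEq; nlinarith [hy.1]))
          have h2 : 0 < Real.sinh (c * |(a + y) / 2 - x₀|) := by
            apply Real.sinh_pos_iff.mpr
            apply mul_pos hc (abs_pos.mpr (by intro hEq; nlinarith [hy.1]))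
          by_contra hle
          push_neg at hle
          have hpp : 0 < Real.sinh (c * |(a + y) / 2 - x₀|) * g y :=
            lt_of_lt_of_le (mul_pos h1 hgx0) hk
          nlinarith [mul_nonpos_of_nonneg_of_nonpos h2.le hle]
        · -- x₀ < y, take x₁ = (y+b)/2 > y
          have hx₁ : (y + b) / 2 ∈ Ioo a b :=
            ⟨by linarith [hy.1, hy.2], by linarith [hy.2]⟩
          have hx₁y : y < (y + b) / 2 := by linarith [hy.2]
          have hyI : y ∈ Set.uIcc x₀ ((y + b) / 2) :=
            Set.mem_uIcc.mpr (Or.inl ⟨hgt.le, hx₁y.le⟩)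
          have hk := key' x₀ hx₀ _ hx₁ (by intro hEq; rw [hEq] at hgt; linarith [hy.2]) y hyI
          have h1 : 0 < Real.sinh (c * |(y + b) / 2 - y|) := by
            apply Real.sinh_pos_iff.mpr
            apply mul_pos hc (abs_pos.mpr (by intro hEq; nlinarith [hy.2]))
          have h2 : 0 < Real.sinh (c * |(y + b) / 2 - x₀|) := by
            apply Real.sinh_pos_iff.mpr
            apply mul_pos hc (abs_pos.mpr (by intro hEq; nlinarith [hy.2]))
          by_contra hle
          push_neg at hle
          have hpp : 0 < Real.sinh (c * |(y + b) / 2 - x₀|) * g y :=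
            lt_of_lt_of_le (mul_pos h1 hgx0) hk
          nlinarith [mul_nonpos_of_nonneg_of_nonpos h2.le hle]
      by_contra hle
      push_neg at hle
      have h0 : h y = 0 := le_antisymm hle (hMCP.1 y hy)
      rw [hgdef] at hgy
      simp only at hgy
      rw [h0, Real.zero_rpow (ne_of_gt hp)] at hgy
      exact lt_irrefl 0 hgy
  -- Part 2: local Lipschitz
  have hlip : ∀ x ∈ Set.Ioo a b, ∃ K : NNReal, ∃ ε : ℝ, 0 < ε ∧
      LipschitzOnWith K h (Set.Ioo a b ∩ Metric.ball x ε) := by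
    intro x hx
    rcases hdich with hzero | hposall
    · refine ⟨0, 1, one_pos, LipschitzOnWith.of_dist_le_mul ?_⟩
      intro y hy z hz
      rw [hzero y hy.1, hzero z hz.1]
      simp [dist_nonneg]
    · set ε := min (x - a) (b - x) / 8 with hεdef
      have hxa : 0 < x - a := by linarith [hx.1]
      have hxb : 0 < b - x := by linarith [hx.2]
      have hε : 0 < ε := by rw [hεdef]; positivity
      have hεa : 8 * ε ≤ x - a := by
        rw [hεdef]; have := min_le_left (x - a) (b - x); linarith
      have hεb : 8 * ε ≤ b - x := by
        rw [hεdef]; have := min_le_right (x - a) (b - x); linarith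
      set D := 4 * ε with hDdef
      set S := Set.Ioo a b ∩ Metric.ball x ε with hSdef
      have hSsub : ∀ y ∈ S, x - ε < y ∧ y < x + ε := by
        intro y hy
        have hb' := hy.2
        rw [Metric.mem_ball, Real.dist_eq, abs_lt] at hb'
        constructor <;> linarith [hb'.1, hb'.2]
      have hball : ∀ y ∈ S, ∀ z ∈ S,
          Real.sinh (c * (D - |z - y|)) * g y ≤ Real.sinh (c * D) * g z := by
        intro y hy z hz
        obtain ⟨hy1, hy2⟩ := hSsub y hy
        obtain ⟨hz1, hz2⟩ := hSsub z hz
        rcases lt_trichotomy y z with hyz | rfl | hzy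
        · have hx₁ : y + D ∈ Ioo a b := ⟨by linarith, by linarith⟩
          have hzu : z ∈ Set.uIcc y (y + D) :=
            Set.mem_uIcc.mpr (Or.inl ⟨hyz.le, by linarith⟩)
          have hk := key' y hy.1 _ hx₁ (by intro hEq; nlinarith) z hzu
          have e1 : |y + D - z| = D - |z - y| := by
            rw [abs_of_nonneg (by linarith : (0:ℝ) ≤ y + D - z),
              abs_of_nonneg (by linarith : (0:ℝ) ≤ z - y)]
            ring
          have e2 : |y + D - y| = D := by
            rw [abs_of_nonneg (by linarith : (0:ℝ) ≤ y + D - y)]; ring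
          rw [e1, e2] at hk
          exact hk
        · rw [sub_self, abs_zero, sub_zero]
        · have hx₁ : y - D ∈ Ioo a b := ⟨by linarith, by linarith⟩
          have hzu : z ∈ Set.uIcc y (y - D) :=
            Set.mem_uIcc.mpr (Or.inr ⟨by linarith, hzy.le⟩)
          have hk := key' y hy.1 _ hx₁ (by intro hEq; nlinarith) z hzu
          have e1 : |y - D - z| = D - |z - y| := by
            rw [abs_of_nonpos (by linarith : y - D - z ≤ (0:ℝ)),
              abs_of_nonpos (by linarith : z - y ≤ (0:ℝ))]
            ring
          have e2 : |y - D - y| = D := by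
            rw [abs_of_nonpos (by linarith : y - D - y ≤ (0:ℝ))]; ring
          rw [e1, e2] at hk
          exact hk
      have hxS : x ∈ S := ⟨hx, Metric.mem_ball_self hε⟩
      have hgx : 0 < g x := Real.rpow_pos_of_pos (hposall x hx) _
      have hSD : 0 < Real.sinh (c * D) :=
        Real.sinh_pos_iff.mpr (by positivity)
      have hS3 : 0 < Real.sinh (c * (3 * ε)) :=
        Real.sinh_pos_iff.mpr (by positivity)
      set Mg := Real.sinh (c * D) / Real.sinh (c * (3 * ε)) * g x with hMgdef
      have hsinh3 : ∀ y ∈ S, Real.sinh (c * (3 * ε)) ≤ Real.sinh (c * (D - |x - y|)) := by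
        intro y hy
        obtain ⟨hy1, hy2⟩ := hSsub y hy
        apply Real.sinh_le_sinh.mpr
        have habs : |x - y| ≤ ε := abs_le.mpr ⟨by linarith, by linarith⟩
        have : 3 * ε ≤ D - |x - y| := by rw [hDdef]; linarith
        exact mul_le_mul_of_nonneg_left this hc.le
      have hsinh3' : ∀ y ∈ S, Real.sinh (c * (3 * ε)) ≤ Real.sinh (c * (D - |y - x|)) := by
        intro y hy
        rw [abs_sub_comm]
        exact hsinh3 y hy
      have hub : ∀ y ∈ S, g y ≤ Mg := by
        intro y hy
        have hk := hball y hy x hxS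
        have h3 := hsinh3 y hy
        have hgy : 0 ≤ g y := gnn y hy.1
        rw [hMgdef, div_mul_eq_mul_div, le_div_iff₀ hS3]
        have h4 := mul_le_mul_of_nonneg_right h3 hgy
        linarith [hk, h4]
      set E := Real.exp (2 * (c * D)) with hEdef
      have hE0 : 0 < E := Real.exp_pos _
      have hKGb : ∀ y ∈ S, ∀ z ∈ S,
          g y - g z ≤ E * c * Mg / Real.sinh (c * D) * |z - y| := by
        intro y hy z hz
        obtain ⟨hy1, hy2⟩ := hSsub y hy
        obtain ⟨hz1, hz2⟩ := hSsub z hz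
        have hk := hball y hy z hz
        have hs0 : 0 ≤ |z - y| := abs_nonneg _
        have hsD : |z - y| ≤ D := by
          rw [abs_le]; constructor <;> linarith
        have hdiff := mcp_aux_sinh_sub_le (c * D) (c * |z - y|) (by positivity)
          (mul_le_mul_of_nonneg_left hsD hc.le)
        have e3 : c * D - c * |z - y| = c * (D - |z - y|) := by ring
        rw [e3] at hdiff
        have hgy0 : 0 ≤ g y := gnn y hy.1
        have hgyM : g y ≤ Mg := hub y hy
        rw [div_mul_eq_mul_div, le_div_iff₀ hSD]
        have h1 := mul_le_mul_of_nonneg_right hdiff hgy0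
        have h2 := mul_le_mul_of_nonneg_left hgyM
          (by positivity : (0:ℝ) ≤ E * (c * |z - y|))
        nlinarith [hk, h1, h2]
      set KG := E * c * Mg / Real.sinh (c * D) with hKGdef
      have hglipd : ∀ y ∈ S, ∀ z ∈ S, |g y - g z| ≤ KG * |y - z| := by
        intro y hy z hz
        rw [abs_sub_le_iff]
        constructor
        · have h1 := hKGb y hy z hz
          rwa [abs_sub_comm z y] at h1
        · exact hKGb z hz y hy
      set mg := Real.sinh (c * (3 * ε)) / Real.sinh (c * D) * g x with hmgdef
      have hmg : 0 < mg := mul_pos (div_pos hS3 hSD) hgx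
      have hlb : ∀ y ∈ S, mg ≤ g y := by
        intro y hy
        have hk := hball x hxS y hy
        have h3 := hsinh3' y hy
        rw [hmgdef, div_mul_eq_mul_div, div_le_iff₀ hSD]
        have h4 := mul_le_mul_of_nonneg_right h3 hgx.le
        linarith [hk, h4]
      have hMg0 : 0 ≤ Mg := le_trans hmg.le (le_trans (hlb x hxS) (hub x hxS))
      set Kφ := (N - 1) * (mg ^ (N - 1 - 1) + Mg ^ (N - 1 - 1)) with hKφdef
      have hKφ0 : 0 ≤ Kφ := mul_nonneg (by linarith)
        (add_nonneg (Real.rpow_nonneg hmg.le _) (Real.rpow_nonneg hMg0 _))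
      have hφ : ∀ u ∈ Set.Icc mg Mg, ∀ v ∈ Set.Icc mg Mg,
          |v ^ (N - 1) - u ^ (N - 1)| ≤ Kφ * |v - u| := by
        intro u hu v hv
        have hmvt := Convex.norm_image_sub_le_of_norm_hasDerivWithin_le
          (f := fun t : ℝ => t ^ (N - 1)) (f' := fun t : ℝ => (N - 1) * t ^ (N - 1 - 1))
          (s := Set.Icc mg Mg) (C := Kφ)
          (fun t ht => (Real.hasDerivAt_rpow_const
            (Or.inl (ne_of_gt (lt_of_lt_of_le hmg ht.1)))).hasDerivWithinAt)
          ?_ (convex_Icc _ _) hu hv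
        · simpa [Real.norm_eq_abs] using hmvt
        · intro t ht
          have ht0 : 0 < t := lt_of_lt_of_le hmg ht.1
          have htnn : 0 ≤ t ^ (N - 1 - 1) := Real.rpow_nonneg ht0.le _
          rw [Real.norm_eq_abs, abs_of_nonneg (mul_nonneg (by linarith) htnn)]
          have hpow : t ^ (N - 1 - 1) ≤ mg ^ (N - 1 - 1) + Mg ^ (N - 1 - 1) := by
            rcases le_total (N - 1 - 1) 0 with hq2 | hq2
            · have h1 := Real.rpow_le_rpow_of_nonpos hmg ht.1 hq2
              have h2 : 0 ≤ Mg ^ (N - 1 - 1) := Real.rpow_nonneg hMg0 _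
              linarith
            · have h1 := Real.rpow_le_rpow ht0.le ht.2 hq2
              have h2 : 0 ≤ mg ^ (N - 1 - 1) := Real.rpow_nonneg hmg.le _
              linarith
          rw [hKφdef]
          exact mul_le_mul_of_nonneg_left hpow (by linarith)
      refine ⟨Real.toNNReal (Kφ * max KG 0), ε, hε, LipschitzOnWith.of_dist_le_mul ?_⟩
      intro y hy z hz
      have hgyI : g y ∈ Set.Icc mg Mg := ⟨hlb y hy, hub y hy⟩
      have hgzI : g z ∈ Set.Icc mg Mg := ⟨hlb z hz, hub z hz⟩
      have hd0 : 0 ≤ dist y z := dist_nonneg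
      have hchain : dist (h y) (h z) ≤ Kφ * max KG 0 * dist y z := by
        rw [Real.dist_eq, Real.dist_eq, ← hgh y hy.1, ← hgh z hz.1]
        calc |g y ^ (N - 1) - g z ^ (N - 1)| ≤ Kφ * |g y - g z| := hφ (g z) hgzI (g y) hgyI
          _ ≤ Kφ * (max KG 0 * |y - z|) := by
              apply mul_le_mul_of_nonneg_left _ hKφ0
              calc |g y - g z| ≤ KG * |y - z| := hglipd y hy z hz
                _ ≤ max KG 0 * |y - z| := mul_le_mul_of_nonneg_right (le_max_left _ _) (abs_nonneg _)
          _ = Kφ * max KG 0 * |y - z| := by ring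
      calc dist (h y) (h z) ≤ Kφ * max KG 0 * dist y z := hchain
        _ ≤ (Real.toNNReal (Kφ * max KG 0) : ℝ) * dist y z := by
            apply mul_le_mul_of_nonneg_right _ hd0
            rw [Real.coe_toNNReal']
            exact le_max_left _ _
  -- Part 3: limits at the endpoints
  set w := (a + b) / 2 with hwdef
  have hW : w ∈ Ioo a b := ⟨by rw [hwdef]; linarith, by rw [hwdef]; linarith⟩
  have tb' : ∃ Lg : ℝ, 0 ≤ Lg ∧ Tendsto g (nhdsWithin b (Set.Iio b)) (nhds Lg) := by
    set F : ℝ → ℝ := fun z => g z / Real.sinh (c * (z - w)) with hF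
    have hFanti : AntitoneOn F (Ioo w b) := by
      intro y hy z hz hyz
      rcases eq_or_lt_of_le hyz with rfl | hlt
      · exact le_refl _
      have hyI : y ∈ Ioo a b := ⟨lt_trans hW.1 hy.1, hy.2⟩
      have hzI : z ∈ Ioo a b := ⟨lt_trans hW.1 hz.1, hz.2⟩
      have hzw : z ≠ w := ne_of_gt hz.1
      have hyu : y ∈ Set.uIcc z w := Set.mem_uIcc.mpr (Or.inr ⟨hy.1.le, hlt.le⟩)
      have hk := key' z hzI w hW hzw y hyu
      rw [abs_sub_comm w y, abs_of_pos (by linarith [hy.1] : (0:ℝ) < y - w),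
        abs_sub_comm w z, abs_of_pos (by linarith [hz.1] : (0:ℝ) < z - w)] at hk
      have hsy : 0 < Real.sinh (c * (y - w)) :=
        Real.sinh_pos_iff.mpr (mul_pos hc (by linarith [hy.1]))
      have hsz : 0 < Real.sinh (c * (z - w)) :=
        Real.sinh_pos_iff.mpr (mul_pos hc (by linarith [hz.1]))
      rw [hF]
      simp only
      rw [div_le_div_iff₀ hsz hsy]
      nlinarith [hk]

    have hne : (Ioo w b).Nonempty := ⟨(w + b) / 2, by constructor <;> linarith [hW.2]⟩
    have hbdd : BddBelow (F '' Ioo w b) := by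
      refine ⟨0, ?_⟩
      rintro _ ⟨z, hz, rfl⟩
      apply div_nonneg (gnn z ⟨lt_trans hW.1 hz.1, hz.2⟩)
      exact (Real.sinh_pos_iff.mpr (mul_pos hc (by linarith [hz.1]))).le
    have hFt := hFanti.tendsto_nhdsWithin_Ioo_left hne hbdd
    have hsinht : Tendsto (fun z => Real.sinh (c * (z - w))) (nhdsWithin b (Set.Iio b))
        (nhds (Real.sinh (c * (b - w)))) := by
      apply Filter.Tendsto.mono_left _ nhdsWithin_le_nhds
      exact (Real.continuous_sinh.comp (by continuity)).tendsto b
    have hmemb : Ioo w b ∈ nhdsWithin b (Set.Iio b) :=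
      Ioo_mem_nhdsLT_of_mem ⟨hW.2, le_refl b⟩
    have hgt : Tendsto g (nhdsWithin b (Set.Iio b))
        (nhds (sInf (F '' Ioo w b) * Real.sinh (c * (b - w)))) := by
      apply (hFt.mul hsinht).congr'
      filter_upwards [hmemb] with z hz
      rw [hF]
      simp only
      rw [div_mul_cancel₀]
      exact ne_of_gt (Real.sinh_pos_iff.mpr (mul_pos hc (by linarith [hz.1])))
    refine ⟨_, ?_, hgt⟩
    have hev : ∀ᶠ z in nhdsWithin b (Set.Iio b), 0 ≤ g z := by
      filter_upwards [hmemb] with z hz using gnn z ⟨lt_trans hW.1 hz.1, hz.2⟩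
    exact ge_of_tendsto hgt hev
  have ta' : ∃ Lg : ℝ, 0 ≤ Lg ∧ Tendsto g (nhdsWithin a (Set.Ioi a)) (nhds Lg) := by
    set F : ℝ → ℝ := fun z => g z / Real.sinh (c * (w - z)) with hF
    have hFmono : MonotoneOn F (Ioo a w) := by
      intro y hy z hz hyz
      rcases eq_or_lt_of_le hyz with rfl | hlt
      · exact le_refl _
      have hyI : y ∈ Ioo a b := ⟨hy.1, lt_trans hy.2 hW.2⟩
      have hzu : z ∈ Set.uIcc y w := Set.mem_uIcc.mpr (Or.inl ⟨hlt.le, hz.2.le⟩)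
      have hk := key' y hyI w hW (ne_of_lt hy.2) z hzu
      rw [abs_of_pos (by linarith [hz.2] : (0:ℝ) < w - z),
        abs_of_pos (by linarith [hy.2] : (0:ℝ) < w - y)] at hk
      have hsy : 0 < Real.sinh (c * (w - y)) :=
        Real.sinh_pos_iff.mpr (mul_pos hc (by linarith [hy.2]))
      have hsz : 0 < Real.sinh (c * (w - z)) :=
        Real.sinh_pos_iff.mpr (mul_pos hc (by linarith [hz.2]))
      rw [hF]
      simp only
      rw [div_le_div_iff₀ hsy hsz]
      nlinarith [hk]
    have hne : (Ioo a w).Nonempty := ⟨(a + w) / 2, by constructor <;> linarith [hW.1]⟩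
    have hbdd : BddBelow (F '' Ioo a w) := by
      refine ⟨0, ?_⟩
      rintro _ ⟨z, hz, rfl⟩
      apply div_nonneg (gnn z ⟨hz.1, lt_trans hz.2 hW.2⟩)
      exact (Real.sinh_pos_iff.mpr (mul_pos hc (by linarith [hz.2]))).le
    have hFt := hFmono.tendsto_nhdsWithin_Ioo_right hne hbdd
    have hsinht : Tendsto (fun z => Real.sinh (c * (w - z))) (nhdsWithin a (Set.Ioi a))
        (nhds (Real.sinh (c * (w - a)))) := by
      apply Filter.Tendsto.mono_left _ nhdsWithin_le_nhds
      exact (Real.continuous_sinh.comp (by continuity)).tendsto a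
    have hmema : Ioo a w ∈ nhdsWithin a (Set.Ioi a) :=
      Ioo_mem_nhdsGT_of_mem ⟨le_refl a, hW.1⟩
    have hgt : Tendsto g (nhdsWithin a (Set.Ioi a))
        (nhds (sInf (F '' Ioo a w) * Real.sinh (c * (w - a)))) := by
      apply (hFt.mul hsinht).congr'
      filter_upwards [hmema] with z hz
      rw [hF]
      simp only
      rw [div_mul_cancel₀]
      exact ne_of_gt (Real.sinh_pos_iff.mpr (mul_pos hc (by linarith [hz.2])))
    refine ⟨_, ?_, hgt⟩
    have hev : ∀ᶠ z in nhdsWithin a (Set.Ioi a), 0 ≤ g z := by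
      filter_upwards [hmema] with z hz using gnn z ⟨hz.1, lt_trans hz.2 hW.2⟩
    exact ge_of_tendsto hgt hev
  obtain ⟨Lga, hLga0, hta⟩ := ta'
  obtain ⟨Lgb, hLgb0, htb⟩ := tb'
  have hmemioa : Ioo a b ∈ nhdsWithin a (Set.Ioi a) :=
    Ioo_mem_nhdsGT_of_mem ⟨le_refl a, hab⟩
  have hmemiob : Ioo a b ∈ nhdsWithin b (Set.Iio b) :=
    Ioo_mem_nhdsLT_of_mem ⟨hab, le_refl b⟩
  have hha : Tendsto h (nhdsWithin a (Set.Ioi a)) (nhds (Lga ^ (N - 1))) := by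
    have hcont : ContinuousAt (fun t : ℝ => t ^ (N - 1)) Lga :=
      Real.continuousAt_rpow_const _ _ (Or.inr (by linarith))
    apply (hcont.tendsto.comp hta).congr'
    filter_upwards [hmemioa] with z hz
    exact hgh z hz
  have hhb : Tendsto h (nhdsWithin b (Set.Iio b)) (nhds (Lgb ^ (N - 1))) := by
    have hcont : ContinuousAt (fun t : ℝ => t ^ (N - 1)) Lgb :=
      Real.continuousAt_rpow_const _ _ (Or.inr (by linarith))
    apply (hcont.tendsto.comp htb).congr'
    filter_upwards [hmemiob] with z hz
    exact hgh z hz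
  set La := Lga ^ (N - 1) with hLadef
  set Lb := Lgb ^ (N - 1) with hLbdef
  refine ⟨hdich, hlip, ⟨La, Lb, hha, hhb⟩, ?_⟩
  set H : ℝ → ℝ := fun y => if y ≤ a then La else if y < b then h y else Lb with hH
  have hHeq : Set.EqOn H h (Set.Ioo a b) := by
    intro y hy
    rw [hH]
    simp only
    rw [if_neg (not_le.mpr hy.1), if_pos hy.2]
  refine ⟨H, ?_, hHeq⟩
  have hconth : ∀ y ∈ Set.Ioo a b, ContinuousAt h y := by
    intro y hy
    obtain ⟨K, ε, hε, hlipy⟩ := hlip y hy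
    have hopen : IsOpen (Set.Ioo a b ∩ Metric.ball y ε) := isOpen_Ioo.inter Metric.isOpen_ball
    exact hlipy.continuousOn.continuousAt (hopen.mem_nhds ⟨hy, Metric.mem_ball_self hε⟩)
  intro y hy
  obtain heq | hya := eq_or_lt_of_le hy.1
  · subst heq
    have hHa : H a = La := by rw [hH]; simp
    show ContinuousWithinAt H (Set.Icc a b) a
    rw [show Set.Icc a b = insert a (Set.Ioc a b) from (Set.Ioc_insert_left hab.le).symm]
    show Filter.Tendsto H (nhdsWithin a (insert a (Set.Ioc a b))) (nhds (H a))
    rw [nhdsWithin_insert, hHa, Filter.tendsto_sup]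
    constructor
    · simpa [hHa] using tendsto_pure_nhds H a
    · rw [nhdsWithin_Ioc_eq_nhdsGT hab]
      apply hha.congr'
      filter_upwards [hmemioa] with z hz
      exact (hHeq hz).symm
  · obtain heq | hyb := eq_or_lt_of_le hy.2
    · subst heq
      have hHb : H y = Lb := by
        rw [hH]
        simp only
        rw [if_neg (not_le.mpr hya), if_neg (lt_irrefl y)]
      show ContinuousWithinAt H (Set.Icc a y) y
      rw [show Set.Icc a y = insert y (Set.Ico a y) from (Set.Ico_insert_right hya.le).symm]
      show Filter.Tendsto H (nhdsWithin y (insert y (Set.Ico a y))) (nhds (H y))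
      rw [nhdsWithin_insert, hHb, Filter.tendsto_sup]
      constructor
      · simpa [hHb] using tendsto_pure_nhds H y
      · rw [nhdsWithin_Ico_eq_nhdsLT hya]
        apply hhb.congr'
        filter_upwards [hmemiob] with z hz
        exact (hHeq hz).symm
    · have hyI : y ∈ Set.Ioo a b := ⟨hya, hyb⟩
      have hev : h =ᶠ[nhds y] H := by
        filter_upwards [isOpen_Ioo.mem_nhds hyI] with z hz
        exact (hHeq hz).symm
      exact ((hconth y hyI).congr hev).continuousWithinAt
end

section
/- Let κ < 0 and N > 1 be real. (i) If h is an MCP(κ,N) density on the interval (a,∞) which is positive at every point of (a,∞), then for every x ∈ (a,∞) at which h is differentiable with derivative h'(x) one has h'(x)/h(x) ≥ −√(−κ·(N−1)). (ii) If h is an MCP(κ,N) density on the interval (−∞,b) which is positive at every point of (−∞,b), then for every x ∈ (−∞,b) at which h is differentiable with derivative h'(x) one has h'(x)/h(x) ≤ √(−κ·(N−1)). -/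
open Set

open Filter Real Topology in
private lemma mcp_key (κ N : ℝ) (hκ : κ < 0) (hN : 1 < N) (a : ℝ) (h : ℝ → ℝ)
    (hmcp : IsMCPNegDensity κ N (Set.Ioi a) h) (hpos : ∀ x ∈ Set.Ioi a, 0 < h x) :
    ∀ x ∈ Set.Ioi a, ∀ d : ℝ, HasDerivAt h d x → -Real.sqrt (-κ * (N - 1)) ≤ d / h x := by
  intro x hx d hd
  have hN1 : (0:ℝ) < N - 1 := by linarith
  set c : ℝ := Real.sqrt (-κ / (N - 1)) with hc
  have hc0 : 0 < c := Real.sqrt_pos.mpr (div_pos (by linarith) hN1)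
  set p : ℝ := 1 / (N - 1) with hp
  have hp0 : 0 < p := by positivity
  have hNp : (N - 1) * p = 1 := by rw [hp]; field_simp
  have hH : 0 < h x := hpos x hx
  -- Step A: for each L > 0.
  have stepA : ∀ L, 0 < L → -((N-1) * c * (Real.cosh (c*L) / Real.sinh (c*L))) ≤ d / h x := by
    intro L hL
    have hS : 0 < Real.sinh (c * L) := Real.sinh_pos_iff.mpr (by positivity)
    have hA : 0 < h x ^ (p - 1) := Real.rpow_pos_of_pos hH _
    -- derivative of F s = h (x + s) ^ p at 0
    have hF1 : HasDerivAt (fun s : ℝ => h (x + s)) d 0 := by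
      have h2 : HasDerivAt (fun s : ℝ => x + s) 1 0 := (hasDerivAt_id 0).const_add x
      have h3 : HasDerivAt h d ((fun s : ℝ => x + s) 0) := by simpa using hd
      simpa [Function.comp_def] using (HasDerivAt.comp 0 h3 h2)
    have hF : HasDerivAt (fun s : ℝ => h (x + s) ^ p) (d * p * h x ^ (p - 1)) 0 := by
      have := hF1.rpow_const (p := p) (Or.inl (by simpa using hH.ne'))
      simpa using this
    -- derivative of ψ
    have hψ1 : HasDerivAt (fun s : ℝ => c * (L - s)) (-c) 0 := by
      have : HasDerivAt (fun s : ℝ => c * L - c * s) (-c) 0 := by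
        simpa using ((hasDerivAt_id (0:ℝ)).const_mul c).const_sub (c * L)
      convert this using 2 with s
      ring
    have hψ2 : HasDerivAt (fun s : ℝ => Real.sinh (c * (L - s)))
        (Real.cosh (c * L) * (-c)) 0 := by
      have := (Real.hasDerivAt_sinh (c * (L - 0))).comp 0 hψ1
      simpa [Function.comp_def] using this
    have hψ : HasDerivAt
        (fun s : ℝ => Real.sinh (c * (L - s)) / Real.sinh (c * L) * h x ^ p)
        (Real.cosh (c * L) * (-c) / Real.sinh (c * L) * h x ^ p) 0 :=
      (hψ2.div_const _).mul_const _
    -- G and its derivative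
    set G : ℝ → ℝ := fun s => h (x + s) ^ p -
        Real.sinh (c * (L - s)) / Real.sinh (c * L) * h x ^ p with hGdef
    have hG : HasDerivAt G
        (d * p * h x ^ (p - 1) - Real.cosh (c * L) * (-c) / Real.sinh (c * L) * h x ^ p) 0 :=
      hF.sub hψ
    have hG0 : G 0 = 0 := by
      simp [hGdef, div_self hS.ne']
    -- nonnegativity of G on (0, L)
    have hGnn : ∀ s ∈ Ioo (0:ℝ) L, 0 ≤ G s := by
      intro s hs
      have hx1 : x + L ∈ Ioi a := by simp only [mem_Ioi] at hx ⊢; linarith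
      have hne : x ≠ x + L := by intro hcon; linarith [hs.2, (by linarith [hcon] : L = 0)]
      have ht : s / L ∈ Icc (0:ℝ) 1 := ⟨div_nonneg hs.1.le hL.le, by
        rw [div_le_one hL]; exact hs.2.le⟩
      have := hmcp.2 x hx (x + L) hx1 hne (s / L) ht
      have e1 : x + L - x = L := by ring
      have e2 : |L| = L := abs_of_pos hL
      have e3 : (1 - s / L) * L = L - s := by field_simp
      have e4 : (1 - s / L) * x + s / L * (x + L) = x + s := by field_simp; ring
      rw [e1, e2, e3, e4] at this
      simp only [hGdef]
      linarith [this]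
    -- right derivative nonneg
    have hslope : Tendsto (slope G 0) (𝓝[>] (0:ℝ)) (𝓝
        (d * p * h x ^ (p - 1) - Real.cosh (c * L) * (-c) / Real.sinh (c * L) * h x ^ p)) :=
      (hasDerivAt_iff_tendsto_slope.mp hG).mono_left
        (nhdsWithin_mono _ (fun y hy => by simpa using ne_of_gt hy))
    have hev : ∀ᶠ s in 𝓝[>] (0:ℝ), 0 ≤ slope G 0 s := by
      filter_upwards [Ioo_mem_nhdsGT hL] with s hs
      rw [slope_def_field]
      have := hGnn s hs
      rw [hG0]
      apply div_nonneg (by linarith) (by linarith [hs.1])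
    have hG' : 0 ≤ d * p * h x ^ (p - 1) - Real.cosh (c * L) * (-c) / Real.sinh (c * L) * h x ^ p :=
      ge_of_tendsto hslope hev
    -- arithmetic
    have hHp : h x ^ p = h x ^ (p - 1) * h x := by
      rw [← Real.rpow_add_one hH.ne' (p - 1)]; norm_num
    set R := Real.cosh (c * L) / Real.sinh (c * L) with hR
    have hR' : Real.cosh (c * L) * (-c) / Real.sinh (c * L) = -(c * R) := by
      rw [hR]; field_simp
    rw [hHp, hR'] at hG'
    -- 0 ≤ d*p*A + c*R*A*H  ⇒  -(N-1)*c*R ≤ d/H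
    have h1 : 0 ≤ h x ^ (p - 1) * (d * p + c * R * h x) := by nlinarith [hG']
    have h2 : 0 ≤ d * p + c * R * h x := by nlinarith [h1, hA]
    have h3 : 0 ≤ (N - 1) * (d * p + c * R * h x) := mul_nonneg hN1.le h2
    have h4 : (N - 1) * (d * p + c * R * h x) = d + (N - 1) * c * R * h x := by
      rw [mul_add, show (N - 1) * (d * p) = d * ((N - 1) * p) by ring, hNp]; ring
    rw [le_div_iff₀ hH]
    nlinarith [h3, h4]
  -- Step B: take L → ∞
  have hcoth : Tendsto (fun y : ℝ => Real.cosh y / Real.sinh y) atTop (𝓝 1) := by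
    have h1 : Tendsto (fun y : ℝ => Real.exp (-(2 * y))) atTop (𝓝 0) :=
      Real.tendsto_exp_neg_atTop_nhds_zero.comp
        (Tendsto.const_mul_atTop (by norm_num : (0:ℝ) < 2) tendsto_id)
    have h2 : Tendsto (fun y : ℝ => (1 + Real.exp (-(2 * y))) / (1 - Real.exp (-(2 * y))))
        atTop (𝓝 ((1 + 0) / (1 - 0))) :=
      Tendsto.div (tendsto_const_nhds.add h1) (tendsto_const_nhds.sub h1) (by norm_num)
    have h3 : ∀ᶠ y : ℝ in atTop,
        (1 + Real.exp (-(2 * y))) / (1 - Real.exp (-(2 * y))) = Real.cosh y / Real.sinh y := by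
      filter_upwards [eventually_gt_atTop (0:ℝ)] with y hy
      have hu1 : 1 < Real.exp y := by rw [show (1:ℝ) = Real.exp 0 by simp]; exact Real.exp_lt_exp.mpr hy
      have hu0 : 0 < Real.exp y := Real.exp_pos y
      rw [Real.cosh_eq, Real.sinh_eq, show -(2 * y) = -y + -y by ring, Real.exp_add,
        Real.exp_neg]
      have hne : Real.exp y - (Real.exp y)⁻¹ ≠ 0 := by
        have : (Real.exp y)⁻¹ < 1 := by
          rw [inv_lt_one_iff₀]; right; exact hu1
        intro hcon; nlinarith
      have hne2 : 1 - (Real.exp y)⁻¹ * (Real.exp y)⁻¹ ≠ 0 := by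
        have : (Real.exp y)⁻¹ < 1 := by
          rw [inv_lt_one_iff₀]; right; exact hu1
        have h0 : 0 < (Real.exp y)⁻¹ := by positivity
        intro hcon; nlinarith
      field_simp
    have := h2.congr' h3
    simpa using this
  have hcL : Tendsto (fun L : ℝ => c * L) atTop atTop :=
    Tendsto.const_mul_atTop hc0 tendsto_id
  have htend : Tendsto (fun L : ℝ => -((N - 1) * c * (Real.cosh (c * L) / Real.sinh (c * L))))
      atTop (𝓝 (-((N - 1) * c))) := by
    have := ((hcoth.comp hcL).const_mul ((N - 1) * c)).neg
    simpa [mul_comm, Function.comp] using this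
  have hsq : Real.sqrt (-κ * (N - 1)) = (N - 1) * c := by
    rw [hc, show -κ * (N - 1) = -κ / (N - 1) * (N - 1) ^ 2 by field_simp,
      Real.sqrt_mul (div_nonneg (by linarith) hN1.le), Real.sqrt_sq hN1.le]
    ring
  rw [hsq]
  refine le_of_tendsto htend ?_
  filter_upwards [eventually_gt_atTop (0:ℝ)] with L hL using stepA L hL

/-- Logarithmic derivative bounds for `MCP(κ,N)` densities (`κ < 0`) on half-infinite
intervals: on `(a,∞)` one has `h'/h ≥ -√(-κ(N-1))`, and on `(-∞,b)` one has
`h'/h ≤ √(-κ(N-1))`, at every differentiability point. -/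
theorem mcp_neg_density_halfline_log_deriv_bounds (κ N : ℝ)
    (hκ : κ < 0) (hN : 1 < N) :
    (∀ (a : ℝ) (h : ℝ → ℝ), IsMCPNegDensity κ N (Set.Ioi a) h →
      (∀ x ∈ Set.Ioi a, 0 < h x) →
      ∀ x ∈ Set.Ioi a, ∀ d : ℝ, HasDerivAt h d x →
        -Real.sqrt (-κ * (N - 1)) ≤ d / h x) ∧
    (∀ (b : ℝ) (h : ℝ → ℝ), IsMCPNegDensity κ N (Set.Iio b) h →
      (∀ x ∈ Set.Iio b, 0 < h x) →
      ∀ x ∈ Set.Iio b, ∀ d : ℝ, HasDerivAt h d x →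
        d / h x ≤ Real.sqrt (-κ * (N - 1))) := by

  constructor
  · exact fun a h hmcp hpos x hx d hd => mcp_key κ N hκ hN a h hmcp hpos x hx d hd
  · intro b h hmcp hpos x hx d hd
    set g : ℝ → ℝ := fun y => h (-y) with hg
    have hmem : ∀ y : ℝ, y ∈ Ioi (-b) → -y ∈ Iio b := by
      intro y hy; simp only [mem_Ioi] at hy; simp only [mem_Iio]; linarith
    have hg_mcp : IsMCPNegDensity κ N (Set.Ioi (-b)) g := by
      constructor
      · intro y hy; exact hmcp.1 (-y) (hmem y hy)
      · intro y₀ hy₀ y₁ hy₁ hne t ht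
        have hne' : -y₀ ≠ -y₁ := fun hcon => hne (by linarith [neg_injective hcon])
        have key := hmcp.2 (-y₀) (hmem y₀ hy₀) (-y₁) (hmem y₁ hy₁) hne' t ht
        have e1 : |(-y₁) - (-y₀)| = |y₁ - y₀| := by
          rw [show -y₁ - -y₀ = -(y₁ - y₀) by ring, abs_neg]
        have e2 : (1 - t) * (-y₀) + t * (-y₁) = -((1 - t) * y₀ + t * y₁) := by ring
        rw [e1, e2] at key
        exact key
    have hg_pos : ∀ y ∈ Ioi (-b), 0 < g y := fun y hy => hpos (-y) (hmem y hy)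
    have hgd : HasDerivAt g (-d) (-x) := by
      have h2 : HasDerivAt (fun y : ℝ => -y) (-1) (-x) := hasDerivAt_neg (-x)
      have h3 : HasDerivAt h d ((fun y : ℝ => -y) (-x)) := by simpa using hd
      have := HasDerivAt.comp (-x) h3 h2
      simpa [hg, Function.comp_def] using this
    have hxg : -x ∈ Ioi (-b) := by
      simp only [mem_Iio] at hx; simp only [mem_Ioi]; linarith
    have key := mcp_key κ N hκ hN (-b) g hg_mcp hg_pos (-x) hxg (-d) hgd
    have : -Real.sqrt (-κ * (N - 1)) ≤ -(d / h x) := by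
      simpa [hg, neg_div] using key
    linarith
end
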